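/- arXiv:2210.00816 — 12 statements merged into one kernel-verified Lean document; each statement's English description precedes it below -/
import Mathlib

section
/- For all natural numbers a ≥ 1 and i, the number f_a + f_{a+i} belongs to the numerical semigroup (additive submonoid of ℕ) generated by f_a + f_0 and f_a + f_{a-1}; concretely, f_a + f_{a+i} = (f_{i-1}+1)·(f_a+f_0) + f_i·(f_a+f_{a-1}) when i ≥ 1. -/
theorem fib_mem_closure (a i : ℕ) (ha : 1 ≤ a) :
    Nat.fib a + Nat.fib (a + i) ∈
      AddSubmonoid.closure {Nat.fib a + Nat.fib 0, Nat.fib a + Nat.fib (a - 1)} ∧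
    (1 ≤ i → Nat.fib a + Nat.fib (a + i) =
      (Nat.fib (i - 1) + 1) * (Nat.fib a + Nat.fib 0) +
        Nat.fib i * (Nat.fib a + Nat.fib (a - 1))) := by
  obtain ⟨b, rfl⟩ : ∃ b, a = b + 1 := ⟨a - 1, (Nat.succ_pred_eq_of_pos ha).symm⟩
  have h1 : Nat.fib (b+1) + Nat.fib 0 ∈
      AddSubmonoid.closure {Nat.fib (b+1) + Nat.fib 0, Nat.fib (b+1) + Nat.fib (b+1-1)} :=
    AddSubmonoid.subset_closure (by left; rfl)
  have h2 : Nat.fib (b+1) + Nat.fib (b+1-1) ∈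
      AddSubmonoid.closure {Nat.fib (b+1) + Nat.fib 0, Nat.fib (b+1) + Nat.fib (b+1-1)} :=
    AddSubmonoid.subset_closure (by right; rfl)
  cases i with
  | zero =>
    refine ⟨?_, by omega⟩
    have := AddSubmonoid.add_mem _ h1 h1
    simpa using this
  | succ j =>
    have hadd := Nat.fib_add b (j+1)
    have key : Nat.fib (b+1) + Nat.fib (b+1+(j+1)) =
        (Nat.fib (j+1-1) + 1) * (Nat.fib (b+1) + Nat.fib 0) +
          Nat.fib (j+1) * (Nat.fib (b+1) + Nat.fib (b+1-1)) := by
      have hb : b + 1 + (j+1) = b + (j+1) + 1 := by ring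
      have hf2 : Nat.fib (j+2) = Nat.fib (j+1) + Nat.fib j := by rw [Nat.fib_add_two]; ring
      rw [hb, hadd]
      simp [hf2]
      ring
    refine ⟨?_, fun _ => key⟩
    rw [key]
    have m1 := nsmul_mem h1 (Nat.fib (j+1-1) + 1)
    have m2 := nsmul_mem h2 (Nat.fib (j+1))
    simp only [smul_eq_mul] at m1 m2
    exact AddSubmonoid.add_mem _ m1 m2
end

section
/- For all natural numbers a ≥ 3, gcd(f_a, f_a + 1) = 1, and hence the additive submonoid of ℕ generated by {f_a + f_n : n ∈ ℕ} has finite complement in ℕ (i.e., is a numerical semigroup). -/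
def S (a : ℕ) : AddSubmonoid ℕ :=
  AddSubmonoid.closure {m : ℕ | ∃ n : ℕ, m = Nat.fib a + Nat.fib n}

theorem gcd_one_and_numerical (a : ℕ) (ha : 3 ≤ a) :
    Nat.gcd (Nat.fib a) (Nat.fib a + 1) = 1 ∧ {n : ℕ | n ∉ S a}.Finite := by
  constructor
  · rw [Nat.gcd_comm, Nat.add_comm (Nat.fib a) 1, Nat.gcd_add_self_left]
    exact Nat.gcd_one_left _
  · set x := Nat.fib a with hx
    have hx2 : 2 ≤ x := by
      calc 2 = Nat.fib 3 := by decide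
      _ ≤ x := Nat.fib_mono ha
    have hxS : x ∈ S a := AddSubmonoid.subset_closure ⟨0, by simp [hx]⟩
    have hx1S : x + 1 ∈ S a := AddSubmonoid.subset_closure ⟨1, by simp [hx]⟩
    apply Set.Finite.subset (Set.finite_Iio (x * x))
    intro n hn
    by_contra h
    simp only [Set.mem_Iio, not_lt] at h
    apply hn
    have hq : n = (n / x - n % x) * x + (n % x) * (x + 1) := by
      have h1 : n % x < x := Nat.mod_lt _ (by omega)
      have h2 : n % x ≤ n / x := by
        have : x ≤ n / x := Nat.le_div_iff_mul_le (by omega) |>.mpr (by nlinarith)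
        omega
      have := Nat.div_add_mod n x
      have : (n / x - n % x) * x = n / x * x - n % x * x := Nat.sub_mul _ _ _
      nlinarith [Nat.sub_add_cancel (Nat.mul_le_mul_right x h2)]
    rw [hq]
    exact add_mem (by simpa [smul_eq_mul] using AddSubmonoid.nsmul_mem _ hxS (n / x - n % x))
      (by simpa [smul_eq_mul] using AddSubmonoid.nsmul_mem _ hx1S (n % x))
end

section
/- For a ≥ 3, the numerical semigroup S(a) generated by {f_a + f_n : n ∈ ℕ} is also generated by the finite set {f_a + f_0, f_a + f_2, f_a + f_3, ..., f_a + f_{a-1}}. -/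
theorem S_finitely_generated (a : ℕ) (ha : 3 ≤ a) :
    S a = AddSubmonoid.closure
      ((fun n => Nat.fib a + Nat.fib n) '' insert 0 (Set.Icc 2 (a - 1))) := by
  obtain ⟨b, rfl⟩ : ∃ b, a = b + 3 := ⟨a - 3, by omega⟩
  set C : AddSubmonoid ℕ := AddSubmonoid.closure
      ((fun n => Nat.fib (b + 3) + Nat.fib n) '' insert 0 (Set.Icc 2 (b + 3 - 1))) with hC
  have memG : ∀ n : ℕ, (n = 0 ∨ (2 ≤ n ∧ n ≤ b + 2)) →
      Nat.fib (b + 3) + Nat.fib n ∈ C := by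
    intro n hn
    apply AddSubmonoid.subset_closure
    refine ⟨n, ?_, rfl⟩
    rcases hn with h | ⟨h1, h2⟩
    · exact Set.mem_insert_iff.2 (Or.inl h)
    · exact Set.mem_insert_iff.2 (Or.inr ⟨h1, by omega⟩)
  have aux : ∀ n : ℕ, Nat.fib (b + 3 + n) ∈ C := by
    intro n
    induction n using Nat.strong_induction_on with
    | _ n ih =>
      match n with
      | 0 =>
        have := memG 0 (Or.inl rfl)
        simpa using this
      | 1 =>
        have h : Nat.fib (b + 3 + 1) = Nat.fib (b + 3) + Nat.fib (b + 2) := by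
          rw [show b + 3 + 1 = b + 2 + 2 from rfl, Nat.fib_add_two, add_comm]
        rw [h]
        exact memG (b + 2) (Or.inr ⟨by omega, le_refl _⟩)
      | (n + 2) =>
        have h : Nat.fib (b + 3 + (n + 2)) =
            Nat.fib (b + 3 + n) + Nat.fib (b + 3 + (n + 1)) := by
          rw [show b + 3 + (n + 2) = b + 3 + n + 2 by omega,
            show b + 3 + (n + 1) = b + 3 + n + 1 by omega, Nat.fib_add_two]
        rw [h]
        exact add_mem (ih n (by omega)) (ih (n + 1) (by omega))
  apply le_antisymm
  · rw [S]
    apply (AddSubmonoid.closure_le).2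
    rintro m ⟨n, rfl⟩
    by_cases hn : n ≤ b + 2
    · rcases Nat.eq_or_lt_of_le (Nat.zero_le n) with h0 | h1
      · exact memG n (Or.inl h0.symm)
      · rcases Nat.eq_or_lt_of_le h1 with h2 | h3
        · have : Nat.fib n = Nat.fib 2 := by rw [← h2]; rfl
          rw [this]
          exact memG 2 (Or.inr ⟨le_refl _, by omega⟩)
        · exact memG n (Or.inr ⟨h3, hn⟩)
    · obtain ⟨k, rfl⟩ : ∃ k, n = b + 3 + k := ⟨n - (b + 3), by omega⟩
      have h1 : Nat.fib (b + 3) ∈ C := by simpa using memG 0 (Or.inl rfl)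
      exact add_mem h1 (aux k)
  · apply (AddSubmonoid.closure_le).2
    rintro m ⟨n, -, rfl⟩
    exact AddSubmonoid.subset_closure ⟨n, rfl⟩
end

section
/- For a ≥ 3, the set {f_a + f_0, f_a + f_2, ..., f_a + f_{a-1}} is the minimal system of generators of S(a); in particular, the embedding dimension of S(a) equals a − 1. -/
theorem msg_S (a : ℕ) (ha : 3 ≤ a) :
    AddSubmonoid.closure
        ((fun n => Nat.fib a + Nat.fib n) '' insert 0 (Set.Icc 2 (a - 1))) = S a ∧
    (∀ Y ⊂ (fun n => Nat.fib a + Nat.fib n) '' insert 0 (Set.Icc 2 (a - 1)),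
        AddSubmonoid.closure Y ≠ S a) ∧
    ((fun n => Nat.fib a + Nat.fib n) '' insert 0 (Set.Icc 2 (a - 1))).ncard = a - 1 := by
  set g : ℕ → ℕ := fun n => Nat.fib a + Nat.fib n with hg
  set T : Set ℕ := insert 0 (Set.Icc 2 (a - 1)) with hT
  set X : Set ℕ := g '' T with hX
  have hfa2 : 2 ≤ Nat.fib a := by
    calc 2 = Nat.fib 3 := rfl
    _ ≤ Nat.fib a := Nat.fib_mono ha
  have ha1 : 2 ≤ a - 1 := by omega
  -- fib n < fib a for n ∈ T
  have hlt : ∀ n ∈ T, Nat.fib n < Nat.fib a := by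
    rintro n (rfl | ⟨h2, h3⟩)
    · simpa using Nat.fib_pos.2 (by omega)
    · calc Nat.fib n ≤ Nat.fib (a - 1) := Nat.fib_mono h3
      _ < Nat.fib (a - 1 + 1) := Nat.fib_lt_fib_succ ha1
      _ = Nat.fib a := by congr 1; omega
  -- injectivity of g on T
  have hinj : Set.InjOn g T := by
    rintro m (rfl | ⟨hm2, hm3⟩) n (rfl | ⟨hn2, hn3⟩) h
    · rfl
    · exfalso; simp [g] at h; omega
    · exfalso; simp [g] at h; omega
    · have : Nat.fib m = Nat.fib n := by simpa [g] using h
      exact Nat.fib_strictMonoOn.injOn hm2 hn2 this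
  -- Part 1
  have part1 : AddSubmonoid.closure X = S a := by
    apply le_antisymm
    · apply AddSubmonoid.closure_le.2
      rintro x ⟨n, _, rfl⟩
      exact AddSubmonoid.subset_closure ⟨n, rfl⟩
    · apply AddSubmonoid.closure_le.2
      rintro x ⟨n, rfl⟩
      -- fib m ∈ closure X for m ≥ a
      have key : ∀ m, a ≤ m → Nat.fib m ∈ AddSubmonoid.closure X := by
        intro m
        induction m using Nat.strong_induction_on with
        | _ m ih =>
          intro hm
          rcases eq_or_lt_of_le hm with rfl | hm1
          · exact AddSubmonoid.subset_closure ⟨0, Or.inl rfl, by simp [g]⟩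
          rcases eq_or_lt_of_le (Nat.succ_le_of_lt hm1) with hm2 | hm2
          · have : Nat.fib m = Nat.fib a + Nat.fib (a - 1) := by
              rw [show m = (a - 1) + 2 from by omega, Nat.fib_add_two,
                show a - 1 + 1 = a from by omega, Nat.add_comm]
            rw [this, show Nat.fib a + Nat.fib (a-1) = g (a-1) from rfl]
            exact AddSubmonoid.subset_closure ⟨a - 1, Or.inr ⟨ha1, le_refl _⟩, rfl⟩
          · have hm3 : m - 2 + 2 = m := by omega
            have : Nat.fib m = Nat.fib (m - 2) + Nat.fib (m - 1) := by
              conv_lhs => rw [← hm3]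
              rw [Nat.fib_add_two, show m - 2 + 1 = m - 1 from by omega]
            rw [this]
            exact add_mem (ih (m-2) (by omega) (by omega)) (ih (m-1) (by omega) (by omega))
      have hfa : Nat.fib a ∈ AddSubmonoid.closure X :=
        AddSubmonoid.subset_closure ⟨0, Or.inl rfl, by simp [g]⟩
      rcases lt_or_ge n a with hn | hn
      · -- n ≤ a - 1
        rcases Nat.lt_or_ge n 2 with hn2 | hn2
        · interval_cases n
          · exact AddSubmonoid.subset_closure ⟨0, Or.inl rfl, rfl⟩
          · exact AddSubmonoid.subset_closure ⟨2, Or.inr ⟨le_refl _, ha1⟩, by simp [g, Nat.fib_one, Nat.fib_two]⟩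
        · exact AddSubmonoid.subset_closure ⟨n, Or.inr ⟨hn2, by omega⟩, rfl⟩
      · exact add_mem hfa (key n hn)
  refine ⟨part1, ?_, ?_⟩
  · -- minimality
    rintro Y ⟨hY1, hY2⟩ hEq
    obtain ⟨x, hxX, hxY⟩ := Set.not_subset.1 hY2
    obtain ⟨n, hnT, rfl⟩ := hxX
    -- every element of closure Y is 0, in Y, or ≥ 2 * fib a
    have hYX : ∀ y ∈ Y, Nat.fib a ≤ y := by
      intro y hy
      obtain ⟨m, _, rfl⟩ := hY1 hy
      simp [g]
    have hbound : ∀ z ∈ AddSubmonoid.closure Y, z = 0 ∨ z ∈ Y ∨ 2 * Nat.fib a ≤ z := by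
      intro z hz
      induction hz using AddSubmonoid.closure_induction with
      | mem y hy => exact Or.inr (Or.inl hy)
      | zero => exact Or.inl rfl
      | add p q hp hq hp' hq' =>
        rcases hp' with rfl | hp' | hp'
        · simpa using (by tauto : q = 0 ∨ q ∈ Y ∨ 2 * Nat.fib a ≤ q)
        · rcases hq' with rfl | hq' | hq'
          · simp [hp']
          · right; right
            have := hYX p hp'; have := hYX q hq'; omega
          · right; right; omega
        · right; right; omega
    have hgn : g n ∈ S a := AddSubmonoid.subset_closure ⟨n, rfl⟩
    rw [← hEq] at hgn
    rcases hbound _ hgn with h0 | hY | hbig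
    · have := hfa2; simp [g] at h0; omega
    · exact hxY hY
    · have := hlt n hnT; simp [g] at hbig; omega
  · -- cardinality
    rw [Set.ncard_image_of_injOn hinj, hT]
    rw [Set.ncard_insert_of_notMem (by simp) (by rw [← Finset.coe_Icc]; exact (Finset.Icc 2 (a-1)).finite_toSet)]
    rw [← Finset.coe_Icc, Set.ncard_coe_finset, Nat.card_Icc]
    omega
end

section
/- For all natural numbers a ≥ 3, every Fibonacci number f_n with n ≥ a belongs to S(a). -/
theorem fib_mem_S (a : ℕ) (ha : 3 ≤ a) (n : ℕ) (hn : a ≤ n) :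
    Nat.fib n ∈ S a := by
  induction n using Nat.strong_induction_on with
  | _ n ih =>
    rcases eq_or_lt_of_le hn with h | h
    · -- n = a
      subst h
      exact AddSubmonoid.subset_closure ⟨0, by simp⟩
    rcases eq_or_lt_of_le (Nat.succ_le_of_lt h) with h1 | h1
    · -- n = a + 1
      have ha1 : 1 ≤ a := by omega
      have : Nat.fib n = Nat.fib a + Nat.fib (a - 1) := by
        rw [← h1, Nat.succ_eq_add_one, show a + 1 = (a - 1) + 2 by omega, Nat.fib_add_two,
          show a - 1 + 1 = a by omega, add_comm]
      rw [this]
      exact AddSubmonoid.subset_closure ⟨a - 1, rfl⟩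
    · -- n ≥ a + 2
      obtain ⟨m, rfl⟩ : ∃ m, n = m + 2 := ⟨n - 2, by omega⟩
      rw [Nat.fib_add_two]
      exact add_mem (ih m (by omega) (by omega)) (ih (m+1) (by omega) (by omega))
end

section
/- Let a ≥ 3 and let (d_2, ..., d_{a-1}) be natural numbers with Σ_{i=2}^{a-1} d_i·f_i ≥ f_a. Then there exist natural numbers (c_2, ..., c_{a-1}) such that Σ_{i=2}^{a-1} d_i·f_i = f_a + Σ_{i=2}^{a-1} c_i·f_i and Σ_{i=2}^{a-1} c_i < Σ_{i=2}^{a-1} d_i. -/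
theorem reduce_representation (a : ℕ) (ha : 3 ≤ a) (d : ℕ → ℕ)
    (hd : Nat.fib a ≤ ∑ i ∈ Finset.Icc 2 (a - 1), d i * Nat.fib i) :
    ∃ c : ℕ → ℕ,
      ∑ i ∈ Finset.Icc 2 (a - 1), d i * Nat.fib i =
        Nat.fib a + ∑ i ∈ Finset.Icc 2 (a - 1), c i * Nat.fib i ∧
      ∑ i ∈ Finset.Icc 2 (a - 1), c i < ∑ i ∈ Finset.Icc 2 (a - 1), d i := by
  induction a using Nat.strong_induction_on generalizing d with
  | _ a IH =>
    rcases Nat.lt_or_ge a 4 with h4 | h4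
    · -- base case a = 3
      have ha3 : a = 3 := by omega
      subst ha3
      have h2 : Nat.fib 2 = 1 := by decide
      have h3 : Nat.fib 3 = 2 := by decide
      simp only [show (3:ℕ) - 1 = 2 from rfl, Finset.Icc_self, Finset.sum_singleton,
        h2, h3, Nat.mul_one] at hd ⊢
      exact ⟨fun _ => d 2 - 2, show d 2 = 2 + (d 2 - 2) by omega,
        show d 2 - 2 < d 2 by omega⟩
    · obtain ⟨m, rfl⟩ : ∃ m, a = m + 4 := ⟨a - 4, by omega⟩
      have hm1 : (m + 4 : ℕ) - 1 = m + 3 := rfl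
      rw [hm1] at hd ⊢
      have hsplit : ∀ g : ℕ → ℕ, ∑ i ∈ Finset.Icc 2 (m+3), g i
            = (∑ i ∈ Finset.Icc 2 (m+2), g i) + g (m+3) := fun g =>
        Finset.sum_Icc_succ_top (by omega) g
      have hsplit2 : ∀ g : ℕ → ℕ, ∑ i ∈ Finset.Icc 2 (m+2), g i
            = (∑ i ∈ Finset.Icc 2 (m+1), g i) + g (m+2) := fun g =>
        Finset.sum_Icc_succ_top (by omega) g
      have hF4 : Nat.fib (m+4) = Nat.fib (m+2) + Nat.fib (m+3) := by
        rw [show m+4 = (m+2)+2 by omega, Nat.fib_add_two]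
      have hF3 : Nat.fib (m+3) = Nat.fib (m+1) + Nat.fib (m+2) := by
        rw [show m+3 = (m+1)+2 by omega, Nat.fib_add_two]
      -- Key claim: the result when the top coefficient is positive
      have key : ∀ e : ℕ → ℕ, 1 ≤ e (m+3) →
          Nat.fib (m+4) ≤ ∑ i ∈ Finset.Icc 2 (m+3), e i * Nat.fib i →
          ∃ c : ℕ → ℕ,
            ∑ i ∈ Finset.Icc 2 (m+3), e i * Nat.fib i
              = Nat.fib (m+4) + ∑ i ∈ Finset.Icc 2 (m+3), c i * Nat.fib i ∧
            ∑ i ∈ Finset.Icc 2 (m+3), c i < ∑ i ∈ Finset.Icc 2 (m+3), e i := by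
        intro e he3 hes
        rcases Nat.eq_zero_or_pos (e (m+2)) with hz | hp
        · rcases Nat.lt_or_ge (e (m+3)) 2 with h1 | h2
          · -- e (m+3) = 1, e (m+2) = 0 : recurse to extract fib (m+2) from low part
            have he3' : e (m+3) = 1 := by omega
            have hlow : Nat.fib (m+2) ≤ ∑ i ∈ Finset.Icc 2 (m+1), e i * Nat.fib i := by
              have t1 := hsplit (fun i => e i * Nat.fib i)
              have t2 := hsplit2 (fun i => e i * Nat.fib i)
              simp only [hz, he3', Nat.zero_mul, Nat.one_mul] at t1 t2
              omega
            rcases Nat.eq_zero_or_pos m with rfl | hm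
            · exfalso
              rw [show Finset.Icc 2 1 = ∅ from rfl] at hlow
              simp at hlow
            · obtain ⟨c, hc1, hc2⟩ := IH (m+2) (by omega) (by omega) e
                (by rw [show m+2-1 = m+1 from rfl]; exact hlow)
              rw [show m+2-1 = m+1 from rfl] at hc1 hc2
              refine ⟨fun i => if m+2 ≤ i then 0 else c i, ?_, ?_⟩
              · have t1 := hsplit (fun i => e i * Nat.fib i)
                have t2 := hsplit2 (fun i => e i * Nat.fib i)
                have t3 := hsplit (fun i => (if m+2 ≤ i then 0 else c i) * Nat.fib i)
                have t4 := hsplit2 (fun i => (if m+2 ≤ i then 0 else c i) * Nat.fib i)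
                have t5 : ∑ i ∈ Finset.Icc 2 (m+1),
                    (if m+2 ≤ i then 0 else c i) * Nat.fib i
                    = ∑ i ∈ Finset.Icc 2 (m+1), c i * Nat.fib i := by
                  apply Finset.sum_congr rfl
                  intro i hi
                  simp only [Finset.mem_Icc] at hi
                  rw [if_neg (by omega)]
                simp only [hz, he3', Nat.zero_mul, Nat.one_mul,
                  if_pos (show m+2 ≤ m+2 by omega), if_pos (show m+2 ≤ m+3 by omega)] at t1 t2 t3 t4
                beta_reduce
                omega
              · have t1 := hsplit (fun i => e i)
                have t2 := hsplit2 (fun i => e i)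
                have t3 := hsplit (fun i => (if m+2 ≤ i then 0 else c i))
                have t4 := hsplit2 (fun i => (if m+2 ≤ i then 0 else c i))
                have t5 : ∑ i ∈ Finset.Icc 2 (m+1), (if m+2 ≤ i then 0 else c i)
                    = ∑ i ∈ Finset.Icc 2 (m+1), c i := by
                  apply Finset.sum_congr rfl
                  intro i hi
                  simp only [Finset.mem_Icc] at hi
                  rw [if_neg (by omega)]
                simp only [hz, he3',
                  if_pos (show m+2 ≤ m+2 by omega), if_pos (show m+2 ≤ m+3 by omega)] at t1 t2 t3 t4
                beta_reduce
                omega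
          · -- e (m+3) ≥ 2 : use 2·fib(m+3) = fib(m+4) + fib(m+1)
            obtain ⟨l, hl⟩ : ∃ l, e (m+3) = l + 2 := ⟨e (m+3) - 2, by omega⟩
            have hj2 : (2:ℕ) ≤ max (m+1) 2 := by omega
            have hj3 : max (m+1) 2 ≤ m+3 := by omega
            have hjfib : Nat.fib (max (m+1) 2) = Nat.fib (m+1) := by
              rcases Nat.eq_zero_or_pos m with rfl | hm
              · decide
              · rw [show max (m+1) 2 = m+1 by omega]
            refine ⟨fun i => (if i = m+3 then l else e i) + (if i = max (m+1) 2 then 1 else 0),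
              ?_, ?_⟩
            · have t1 := hsplit (fun i => e i * Nat.fib i)
              have hsum1 : ∑ i ∈ Finset.Icc 2 (m+3),
                  ((if i = m+3 then l else e i) + (if i = max (m+1) 2 then 1 else 0)) * Nat.fib i
                  = (∑ i ∈ Finset.Icc 2 (m+2), e i * Nat.fib i) + l * Nat.fib (m+3)
                    + Nat.fib (m+1) := by
                have step : ∀ i, ((if i = m+3 then l else e i) + (if i = max (m+1) 2 then 1 else 0)) * Nat.fib i
                    = (if i = m+3 then l else e i) * Nat.fib i
                      + (if i = max (m+1) 2 then Nat.fib i else 0) :=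
                  fun i => by rw [Nat.add_mul]; congr 1; split <;> simp
                simp only [step]
                rw [Finset.sum_add_distrib]
                rw [Finset.sum_ite_eq' (Finset.Icc 2 (m+3)) (max (m+1) 2) Nat.fib,
                  if_pos (Finset.mem_Icc.mpr ⟨hj2, hj3⟩), hjfib]
                congr 1
                rw [hsplit (fun i => (if i = m+3 then l else e i) * Nat.fib i)]
                rw [if_pos rfl]
                congr 1
                apply Finset.sum_congr rfl
                intro i hi
                simp only [Finset.mem_Icc] at hi
                rw [if_neg (by omega)]
              beta_reduce
              rw [hsum1, t1, hl]
              have expand : (l + 2) * Nat.fib (m+3) = l * Nat.fib (m+3) + 2 * Nat.fib (m+3) :=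
                Nat.add_mul l 2 _
              omega
            · have t1 := hsplit (fun i => e i)
              have hsum1 : ∑ i ∈ Finset.Icc 2 (m+3),
                  ((if i = m+3 then l else e i) + (if i = max (m+1) 2 then 1 else 0))
                  = (∑ i ∈ Finset.Icc 2 (m+2), e i) + l + 1 := by
                rw [Finset.sum_add_distrib]
                rw [Finset.sum_ite_eq' (Finset.Icc 2 (m+3)) (max (m+1) 2) (fun _ => 1),
                  if_pos (Finset.mem_Icc.mpr ⟨hj2, hj3⟩)]
                rw [hsplit (fun i => (if i = m+3 then l else e i)), if_pos rfl]
                have : ∑ i ∈ Finset.Icc 2 (m+2), (if i = m+3 then l else e i)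
                    = ∑ i ∈ Finset.Icc 2 (m+2), e i := by
                  apply Finset.sum_congr rfl
                  intro i hi
                  simp only [Finset.mem_Icc] at hi
                  rw [if_neg (by omega)]
                omega
              beta_reduce
              rw [hsum1, t1, hl]
              omega
        · -- e (m+2) ≥ 1 and e (m+3) ≥ 1 : subtract one from each
          obtain ⟨k, hk⟩ : ∃ k, e (m+2) = k + 1 := ⟨e (m+2) - 1, by omega⟩
          obtain ⟨l, hl⟩ : ∃ l, e (m+3) = l + 1 := ⟨e (m+3) - 1, by omega⟩
          refine ⟨fun i => if i = m+3 then l else if i = m+2 then k else e i, ?_, ?_⟩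
          · have t1 := hsplit (fun i => e i * Nat.fib i)
            have t2 := hsplit2 (fun i => e i * Nat.fib i)
            have t3 := hsplit (fun i => (if i = m+3 then l else if i = m+2 then k else e i) * Nat.fib i)
            have t4 := hsplit2 (fun i => (if i = m+3 then l else if i = m+2 then k else e i) * Nat.fib i)
            have t5 : ∑ i ∈ Finset.Icc 2 (m+1),
                (if i = m+3 then l else if i = m+2 then k else e i) * Nat.fib i
                = ∑ i ∈ Finset.Icc 2 (m+1), e i * Nat.fib i := by
              apply Finset.sum_congr rfl
              intro i hi
              simp only [Finset.mem_Icc] at hi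
              rw [if_neg (by omega), if_neg (by omega)]
            simp only [eq_self_iff_true, if_true, if_neg (show m+2 ≠ m+3 by omega)] at t3 t4
            beta_reduce
            rw [hl] at t1
            rw [hk] at t2
            have e1 : (k + 1) * Nat.fib (m+2) = k * Nat.fib (m+2) + Nat.fib (m+2) := by
              rw [Nat.add_mul]; omega
            have e2 : (l + 1) * Nat.fib (m+3) = l * Nat.fib (m+3) + Nat.fib (m+3) := by
              rw [Nat.add_mul]; omega
            omega
          · have t1 := hsplit (fun i => e i)
            have t2 := hsplit2 (fun i => e i)
            have t3 := hsplit (fun i => (if i = m+3 then l else if i = m+2 then k else e i))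
            have t4 := hsplit2 (fun i => (if i = m+3 then l else if i = m+2 then k else e i))
            have t5 : ∑ i ∈ Finset.Icc 2 (m+1),
                (if i = m+3 then l else if i = m+2 then k else e i)
                = ∑ i ∈ Finset.Icc 2 (m+1), e i := by
              apply Finset.sum_congr rfl
              intro i hi
              simp only [Finset.mem_Icc] at hi
              rw [if_neg (by omega), if_neg (by omega)]
            simp only [eq_self_iff_true, if_true, if_neg (show m+2 ≠ m+3 by omega)] at t3 t4
            beta_reduce
            omega
      -- Now the main case split on d (m+3)
      rcases Nat.eq_zero_or_pos (d (m+3)) with hz | hp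
      · -- d (m+3) = 0 : extract fib (m+3) from the low part, then apply key
        have t1 := hsplit (fun i => d i * Nat.fib i)
        simp only [hz, Nat.zero_mul] at t1
        have hlow : Nat.fib (m+3) ≤ ∑ i ∈ Finset.Icc 2 (m+2), d i * Nat.fib i := by omega
        obtain ⟨c, hc1, hc2⟩ := IH (m+3) (by omega) (by omega) d
          (by rw [show m+3-1 = m+2 from rfl]; exact hlow)
        rw [show m+3-1 = m+2 from rfl] at hc1 hc2
        set e : ℕ → ℕ := fun i => if i = m+3 then 1 else c i with he
        have hesum : ∑ i ∈ Finset.Icc 2 (m+3), e i * Nat.fib i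
            = ∑ i ∈ Finset.Icc 2 (m+3), d i * Nat.fib i := by
          rw [hsplit (fun i => e i * Nat.fib i)]
          have : ∑ i ∈ Finset.Icc 2 (m+2), e i * Nat.fib i
              = ∑ i ∈ Finset.Icc 2 (m+2), c i * Nat.fib i := by
            apply Finset.sum_congr rfl
            intro i hi
            simp only [Finset.mem_Icc] at hi
            simp only [he, if_neg (show i ≠ m+3 by omega)]
          rw [this]
          simp only [he, if_pos rfl, Nat.one_mul]
          omega
        have hecount : ∑ i ∈ Finset.Icc 2 (m+3), e i ≤ ∑ i ∈ Finset.Icc 2 (m+3), d i := by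
          rw [hsplit (fun i => e i), hsplit (fun i => d i)]
          have : ∑ i ∈ Finset.Icc 2 (m+2), e i = ∑ i ∈ Finset.Icc 2 (m+2), c i := by
            apply Finset.sum_congr rfl
            intro i hi
            simp only [Finset.mem_Icc] at hi
            simp only [he, if_neg (show i ≠ m+3 by omega)]
          rw [this]
          simp only [he, if_pos rfl]
          omega
        obtain ⟨c', h1, h2⟩ := key e (by simp [he]) (by rw [hesum]; exact hd)
        exact ⟨c', by omega, by omega⟩
      · exact key d hp hd
end

section
/- Let a ≥ 3, let β(x) denote the minimal number of summands in a representation of x as a sum of Fibonacci numbers f_i with i ≥ 2 (repetitions allowed), and let S(a) be the numerical semigroup generated by {f_a + f_n : n ∈ ℕ}. Then for every x ∈ {0, 1, ..., f_a − 1}, the least element of S(a) congruent to x modulo f_a is β(x)·f_a + x. Equivalently, the Apéry set Ap(S(a), f_a) equals {β(x)·f_a + x : 0 ≤ x ≤ f_a − 1}. -/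
noncomputable def beta (x : ℕ) : ℕ :=
  sInf {k : ℕ | ∃ M : Multiset ℕ,
    (∀ i ∈ M, 2 ≤ i) ∧ (M.map Nat.fib).sum = x ∧ M.card = k}

lemma betaSet_nonempty (x : ℕ) : {k : ℕ | ∃ M : Multiset ℕ,
    (∀ i ∈ M, 2 ≤ i) ∧ (M.map Nat.fib).sum = x ∧ M.card = k}.Nonempty := by
  refine ⟨x, Multiset.replicate x 2, ?_, ?_, ?_⟩
  · intro i hi; rw [Multiset.eq_of_mem_replicate hi]
  · simp [Multiset.map_replicate, Multiset.sum_replicate]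
  · simp

lemma beta_spec (x : ℕ) : ∃ M : Multiset ℕ,
    (∀ i ∈ M, 2 ≤ i) ∧ (M.map Nat.fib).sum = x ∧ M.card = beta x :=
  Nat.sInf_mem (betaSet_nonempty x)

lemma beta_le {x : ℕ} (M : Multiset ℕ) (h2 : ∀ i ∈ M, 2 ≤ i)
    (hs : (M.map Nat.fib).sum = x) : beta x ≤ M.card :=
  Nat.sInf_le ⟨M, h2, hs, rfl⟩

lemma mem_S_iff {a s : ℕ} :
    s ∈ S a ↔ ∃ M : Multiset ℕ, M.card * Nat.fib a + (M.map Nat.fib).sum = s := by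
  constructor
  · intro hs
    induction hs using AddSubmonoid.closure_induction with
    | mem m hm => obtain ⟨n, rfl⟩ := hm; exact ⟨{n}, by simp⟩
    | zero => exact ⟨0, by simp⟩
    | add u v _ _ hu hv =>
      obtain ⟨M, hM⟩ := hu; obtain ⟨N, hN⟩ := hv
      exact ⟨M + N, by simp [add_mul]; omega⟩
  · rintro ⟨M, rfl⟩
    induction M using Multiset.induction with
    | empty => simp
    | cons i M ih =>
      have : (i ::ₘ M).card * Nat.fib a + ((i ::ₘ M).map Nat.fib).sum
          = (Nat.fib a + Nat.fib i) + (M.card * Nat.fib a + (M.map Nat.fib).sum) := by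
        simp [add_mul]; ring
      rw [this]
      exact add_mem (AddSubmonoid.subset_closure ⟨i, rfl⟩) ih

lemma beta_le_card (M : Multiset ℕ) : beta (M.map Nat.fib).sum ≤ M.card := by
  classical
  set N := (M.filter (fun i => i ≠ 0)).map (fun i => max i 2) with hN
  have h2 : ∀ i ∈ N, 2 ≤ i := by
    intro i hi
    obtain ⟨j, _, rfl⟩ := Multiset.mem_map.1 hi
    exact le_max_right _ _
  have hsum : (N.map Nat.fib).sum = (M.map Nat.fib).sum := by
    rw [hN, Multiset.map_map]
    have h1 : ∀ i ∈ M.filter (fun i => i ≠ 0), (Nat.fib ∘ fun i => max i 2) i = Nat.fib i := by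
      intro i hi
      have hi0 : i ≠ 0 := (Multiset.mem_filter.1 hi).2
      rcases i with _ | _ | i
      · omega
      · simp [Nat.fib_one, Nat.fib_two]
      · simp [Nat.max_eq_left (by omega : 2 ≤ i + 2)]
    rw [Multiset.map_congr rfl h1]
    conv_rhs => rw [← Multiset.filter_add_not (fun i => i ≠ 0) M]
    rw [Multiset.map_add, Multiset.sum_add]
    have : ((M.filter (fun i => ¬ i ≠ 0)).map Nat.fib).sum = 0 := by
      apply Multiset.sum_eq_zero
      intro x hx
      obtain ⟨j, hj, rfl⟩ := Multiset.mem_map.1 hx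
      have : j = 0 := by simpa using (Multiset.mem_filter.1 hj).2
      simp [this]
    omega
  calc beta (M.map Nat.fib).sum ≤ N.card := beta_le N h2 hsum
    _ = (M.filter (fun i => i ≠ 0)).card := by simp [hN]
    _ ≤ M.card := Multiset.card_le_card (Multiset.filter_le _ _)


lemma erase_sum {M : Multiset ℕ} {i : ℕ} (hi : i ∈ M) :
    ((M.erase i).map Nat.fib).sum + Nat.fib i = (M.map Nat.fib).sum := by
  conv_rhs => rw [← Multiset.cons_erase hi]
  simp [add_comm]

lemma subFib : ∀ a : ℕ, 1 ≤ a → ∀ M : Multiset ℕ, (∀ i ∈ M, i < a) →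
    Nat.fib a ≤ (M.map Nat.fib).sum →
    ∃ M' : Multiset ℕ, (∀ i ∈ M', i < a) ∧
      (M'.map Nat.fib).sum + Nat.fib a = (M.map Nat.fib).sum ∧ M'.card < M.card := by
  intro a
  induction a using Nat.strong_induction_on with
  | _ a IH =>
  match a with
  | 0 => intro h; omega
  | 1 =>
    intro _ M hM hs
    exfalso
    have : (M.map Nat.fib).sum = 0 := by
      apply Multiset.sum_eq_zero
      intro x hx
      obtain ⟨j, hj, rfl⟩ := Multiset.mem_map.1 hx
      have : j = 0 := by have := hM j hj; omega
      simp [this]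
    simp [Nat.fib_one] at hs; omega
  | 2 =>
    intro _ M hM hs
    have h1 : (1 : ℕ) ∈ M := by
      by_contra h
      have : (M.map Nat.fib).sum = 0 := by
        apply Multiset.sum_eq_zero
        intro x hx
        obtain ⟨j, hj, rfl⟩ := Multiset.mem_map.1 hx
        have hj2 := hM j hj
        have hne : j ≠ 1 := fun hji => h (hji ▸ hj)
        have : j = 0 := by omega
        simp [this]
      rw [this] at hs
      simp [Nat.fib_two] at hs
    refine ⟨M.erase 1, ?_, ?_, ?_⟩
    · intro i hi; exact hM i (Multiset.mem_of_mem_erase hi)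
    · rw [show Nat.fib 2 = Nat.fib 1 from rfl]; exact erase_sum h1
    · exact Multiset.card_erase_lt_of_mem h1
  | (b+3) =>
    intro _ M hM hs
    have fib3 : Nat.fib (b+3) = Nat.fib (b+1) + Nat.fib (b+2) := Nat.fib_add_two
    have fib2 : Nat.fib (b+2) = Nat.fib b + Nat.fib (b+1) := Nat.fib_add_two
    by_cases h1 : (b+2) ∈ M
    · by_cases h2 : (b+1) ∈ M.erase (b+2)
      · -- contains a-1 and a-2 : remove both
        refine ⟨(M.erase (b+2)).erase (b+1), ?_, ?_, ?_⟩
        · intro i hi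
          exact hM i (Multiset.mem_of_mem_erase (Multiset.mem_of_mem_erase hi))
        · have e1 := erase_sum h1
          have e2 := erase_sum h2
          omega
        · have := Multiset.card_erase_lt_of_mem h2
          have := Multiset.card_erase_lt_of_mem h1
          have : (M.erase (b+2)).card = M.card - 1 := Multiset.card_erase_of_mem h1
          have hMc : 0 < Multiset.card M := Multiset.card_pos_iff_exists_mem.2 ⟨_, h1⟩
          omega
      · by_cases h3 : (b+2) ∈ M.erase (b+2)
        · -- contains two copies of a-1 : replace by a-3 = b
          refine ⟨b ::ₘ (M.erase (b+2)).erase (b+2), ?_, ?_, ?_⟩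
          · intro i hi
            rcases Multiset.mem_cons.1 hi with rfl | hi
            · omega
            · exact hM i (Multiset.mem_of_mem_erase (Multiset.mem_of_mem_erase hi))
          · have e1 := erase_sum h1
            have e2 := erase_sum h3
            simp only [Multiset.map_cons, Multiset.sum_cons]
            omega
          · have c1 : (M.erase (b+2)).card = M.card - 1 := Multiset.card_erase_of_mem h1
            have c2 := Multiset.card_erase_lt_of_mem h3
            simp only [Multiset.card_cons]
            omega
        · -- exactly one a-1, no a-2 : rest has indices < b+1
          have hRidx : ∀ i ∈ M.erase (b+2), i < b + 1 := by
            intro i hi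
            have := hM i (Multiset.mem_of_mem_erase hi)
            have hne2 : i ≠ b + 2 := fun h => h3 (h ▸ hi)
            have hne1 : i ≠ b + 1 := fun h => h2 (h ▸ hi)
            omega
          have e1 := erase_sum h1
          have hRsum : Nat.fib (b+1) ≤ ((M.erase (b+2)).map Nat.fib).sum := by omega
          obtain ⟨R', hR'idx, hR'sum, hR'card⟩ := IH (b+1) (by omega) (by omega) _ hRidx hRsum
          refine ⟨R', fun i hi => by have := hR'idx i hi; omega, by omega, ?_⟩
          have : (M.erase (b+2)).card = M.card - 1 := Multiset.card_erase_of_mem h1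
          have hMc : 0 < Multiset.card M := Multiset.card_pos_iff_exists_mem.2 ⟨_, h1⟩
          omega
    · by_cases h2 : (b+1) ∈ M
      · -- no a-1, has a-2
        have hRidx : ∀ i ∈ M.erase (b+1), i < b + 2 := by
          intro i hi
          have := hM i (Multiset.mem_of_mem_erase hi)
          have hne : i ≠ b + 2 := fun h => h1 (h ▸ Multiset.mem_of_mem_erase hi)
          omega
        have e1 := erase_sum h2
        have hRsum : Nat.fib (b+2) ≤ ((M.erase (b+1)).map Nat.fib).sum := by omega
        obtain ⟨R', hR'idx, hR'sum, hR'card⟩ := IH (b+2) (by omega) (by omega) _ hRidx hRsum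
        refine ⟨R', fun i hi => by have := hR'idx i hi; omega, by omega, ?_⟩
        have : (M.erase (b+1)).card = M.card - 1 := Multiset.card_erase_of_mem h2
        have hMc : 0 < Multiset.card M := Multiset.card_pos_iff_exists_mem.2 ⟨_, h2⟩
        omega
      · -- indices < b+1
        have hMidx : ∀ i ∈ M, i < b + 1 := by
          intro i hi
          have := hM i hi
          have hne2 : i ≠ b + 2 := fun h => h1 (h ▸ hi)
          have hne1 : i ≠ b + 1 := fun h => h2 (h ▸ hi)
          omega
        have hle : Nat.fib (b+1) ≤ (M.map Nat.fib).sum := by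
          have := Nat.fib_mono (show b + 1 ≤ b + 3 by omega)
          omega
        obtain ⟨M1, h1idx, h1sum, h1card⟩ := IH (b+1) (by omega) (by omega) M hMidx hle
        have h2le : Nat.fib (b+2) ≤ (M1.map Nat.fib).sum := by omega
        obtain ⟨M2, h2idx, h2sum, h2card⟩ := IH (b+2) (by omega) (by omega) M1
          (fun i hi => by have := h1idx i hi; omega) h2le
        exact ⟨M2, fun i hi => by have := h2idx i hi; omega, by omega, by omega⟩

lemma beta_bound (c : ℕ) (hc : 2 ≤ c) : ∀ z : ℕ, ∀ M : Multiset ℕ,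
    (M.map Nat.fib).sum = z →
    beta (z % Nat.fib (c+1)) ≤ M.card + z / Nat.fib (c+1) := by
  have hfa : 2 ≤ Nat.fib (c+1) := by
    calc 2 = Nat.fib 3 := rfl
    _ ≤ Nat.fib (c+1) := Nat.fib_mono (by omega)
  intro z
  induction z using Nat.strong_induction_on with
  | _ z IH =>
  intro M hMz
  by_cases hbig : ∃ i ∈ M, c + 1 ≤ i
  · obtain ⟨i, hiM, hia⟩ := hbig
    obtain ⟨p, rfl⟩ : ∃ p, i = p + c + 1 := ⟨i - c - 1, by omega⟩
    have hfi : Nat.fib (p + c + 1) = Nat.fib p * Nat.fib c + Nat.fib (p+1) * Nat.fib (c+1) :=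
      Nat.fib_add p c
    have e1 := erase_sum hiM
    set z' := ((M.erase (p + c + 1)).map Nat.fib).sum + Nat.fib p * Nat.fib c with hz'
    have hzz : z = z' + Nat.fib (p+1) * Nat.fib (c+1) := by omega
    have hfp1 : 1 ≤ Nat.fib (p+1) := Nat.fib_pos.2 (by omega)
    have hlt : z' < z := by nlinarith
    have hM' : ((M.erase (p + c + 1) + Multiset.replicate (Nat.fib p) c).map Nat.fib).sum = z' := by
      rw [Multiset.map_add, Multiset.sum_add, Multiset.map_replicate, Multiset.sum_replicate]
      simp [hz', smul_eq_mul]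
    have hIH := IH z' hlt _ hM'
    have hcard : (M.erase (p + c + 1) + Multiset.replicate (Nat.fib p) c).card
        = M.card - 1 + Nat.fib p := by
      simp [Multiset.card_erase_of_mem hiM]
    have hmod : z % Nat.fib (c+1) = z' % Nat.fib (c+1) := by
      rw [hzz, Nat.add_mul_mod_self_right]
    have hdiv : z / Nat.fib (c+1) = z' / Nat.fib (c+1) + Nat.fib (p+1) := by
      rw [hzz, Nat.add_mul_div_right _ _ (by omega : 0 < Nat.fib (c+1))]
    have hmono : Nat.fib p ≤ Nat.fib (p+1) := Nat.fib_mono (by omega)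
    have hcpos : 0 < Multiset.card M := Multiset.card_pos_iff_exists_mem.2 ⟨_, hiM⟩
    rw [hmod]
    omega
  · push_neg at hbig
    by_cases hz : z < Nat.fib (c+1)
    · rw [Nat.mod_eq_of_lt hz, Nat.div_eq_of_lt hz]
      have := beta_le_card M
      rw [hMz] at this
      omega
    · push_neg at hz
      obtain ⟨M', hidx, hsum, hcard⟩ := subFib (c+1) (by omega) M
        (fun i hi => by have := hbig i hi; omega) (hMz ▸ hz)
      rw [hMz] at hsum
      have hlt : (M'.map Nat.fib).sum < z := by omega
      have hIH := IH _ hlt M' rfl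
      have hmod : z % Nat.fib (c+1) = (M'.map Nat.fib).sum % Nat.fib (c+1) := by
        conv_lhs => rw [← hsum]
        rw [Nat.add_mod_right]
      have hdiv : z / Nat.fib (c+1) = (M'.map Nat.fib).sum / Nat.fib (c+1) + 1 := by
        conv_lhs => rw [← hsum]
        rw [Nat.add_div_right _ (by omega : 0 < Nat.fib (c+1))]
      rw [hmod]
      omega

lemma mem_S_of (a x q : ℕ) (h : beta x ≤ q) : q * Nat.fib a + x ∈ S a := by
  obtain ⟨M, h2, hsum, hcard⟩ := beta_spec x
  refine mem_S_iff.2 ⟨M + Multiset.replicate (q - beta x) 0, ?_⟩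
  rw [Multiset.card_add, Multiset.map_add, Multiset.sum_add, Multiset.map_replicate,
    Multiset.sum_replicate, Multiset.card_replicate]
  simp only [Nat.fib_zero, smul_eq_mul, Nat.mul_zero, Nat.add_zero]
  rw [hsum, hcard]
  have : (beta x + (q - beta x)) = q := by omega
  rw [this]

lemma beta_le_div (a : ℕ) (ha : 3 ≤ a) (s : ℕ) (hs : s ∈ S a) :
    beta (s % Nat.fib a) ≤ s / Nat.fib a := by
  obtain ⟨M, hM⟩ := mem_S_iff.1 hs
  obtain ⟨c, rfl⟩ : ∃ c, a = c + 1 := ⟨a - 1, by omega⟩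
  have hfa : 0 < Nat.fib (c+1) := Nat.fib_pos.2 (by omega)
  have hb := beta_bound c (by omega) _ M rfl
  have hmod : s % Nat.fib (c+1) = (M.map Nat.fib).sum % Nat.fib (c+1) := by
    conv_lhs => rw [← hM, Nat.add_comm, Nat.add_mul_mod_self_right]
  have hdiv : s / Nat.fib (c+1) = (M.map Nat.fib).sum / Nat.fib (c+1) + M.card := by
    conv_lhs => rw [← hM, Nat.add_comm, Nat.add_mul_div_right _ _ hfa]
  rw [hmod]
  omega

lemma beta_eq_zero {x : ℕ} (h : beta x = 0) : x = 0 := by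
  obtain ⟨M, _, hsum, hcard⟩ := beta_spec x
  rw [h, Multiset.card_eq_zero] at hcard
  rw [← hsum, hcard]
  simp

theorem apery_S (a : ℕ) (ha : 3 ≤ a) :
    (∀ x < Nat.fib a,
      IsLeast {s : ℕ | s ∈ S a ∧ s % Nat.fib a = x} (beta x * Nat.fib a + x)) ∧
    {s : ℕ | s ∈ S a ∧ ∀ t : ℕ, t + Nat.fib a = s → t ∉ S a} =
      (fun x => beta x * Nat.fib a + x) '' Set.Iio (Nat.fib a) := by
  have hfa : 2 ≤ Nat.fib a := by
    calc 2 = Nat.fib 3 := rfl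
    _ ≤ Nat.fib a := Nat.fib_mono ha
  have hpart1 : ∀ x < Nat.fib a,
      IsLeast {s : ℕ | s ∈ S a ∧ s % Nat.fib a = x} (beta x * Nat.fib a + x) := by
    intro x hx
    constructor
    · refine ⟨mem_S_of a x (beta x) le_rfl, ?_⟩
      rw [Nat.add_comm, Nat.add_mul_mod_self_right]
      exact Nat.mod_eq_of_lt hx
    · rintro s ⟨hs, hmod⟩
      have h1 := beta_le_div a ha s hs
      rw [hmod] at h1
      have h2 : Nat.fib a * (s / Nat.fib a) + x = s := by
        conv_rhs => rw [← Nat.div_add_mod s (Nat.fib a), hmod]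
      have h3 : beta x * Nat.fib a ≤ (s / Nat.fib a) * Nat.fib a :=
        Nat.mul_le_mul_right _ h1
      have h4 : (s / Nat.fib a) * Nat.fib a = Nat.fib a * (s / Nat.fib a) := Nat.mul_comm _ _
      omega
  refine ⟨hpart1, ?_⟩
  ext s
  simp only [Set.mem_setOf_eq, Set.mem_image, Set.mem_Iio]
  constructor
  · rintro ⟨hs, ht⟩
    have hxlt : s % Nat.fib a < Nat.fib a := Nat.mod_lt _ (by omega)
    refine ⟨s % Nat.fib a, hxlt, ?_⟩
    have h1 : beta (s % Nat.fib a) ≤ s / Nat.fib a := beta_le_div a ha s hs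
    have h2 : Nat.fib a * (s / Nat.fib a) + s % Nat.fib a = s := Nat.div_add_mod s (Nat.fib a)
    by_cases heq : s / Nat.fib a = beta (s % Nat.fib a)
    · have h4 : beta (s % Nat.fib a) * Nat.fib a = Nat.fib a * (s / Nat.fib a) := by
        rw [heq, Nat.mul_comm]
      omega
    · exfalso
      obtain ⟨r, hr⟩ : ∃ r, s / Nat.fib a = r + 1 := ⟨s / Nat.fib a - 1, by omega⟩
      have hrβ : beta (s % Nat.fib a) ≤ r := by omega
      have h5 : Nat.fib a * (r + 1) = r * Nat.fib a + Nat.fib a := by ring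
      rw [hr] at h2
      have hts : r * Nat.fib a + s % Nat.fib a + Nat.fib a = s := by omega
      exact ht _ hts (mem_S_of a (s % Nat.fib a) r hrβ)
  · rintro ⟨x, hxlt, rfl⟩
    refine ⟨mem_S_of a x (beta x) le_rfl, ?_⟩
    intro t hts htS
    rcases Nat.eq_zero_or_pos (beta x) with h0 | hpos
    · have hx0 : x = 0 := beta_eq_zero h0
      rw [h0, hx0] at hts
      simp at hts
      omega
    · obtain ⟨r, hr⟩ : ∃ r, beta x = r + 1 := ⟨beta x - 1, by omega⟩
      have h5 : (r + 1) * Nat.fib a = r * Nat.fib a + Nat.fib a := by ring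
      have htval : t = r * Nat.fib a + x := by
        rw [hr] at hts
        omega
      have htmod : t % Nat.fib a = x := by
        rw [htval, Nat.add_comm, Nat.add_mul_mod_self_right]
        exact Nat.mod_eq_of_lt hxlt
      have h1 := (hpart1 x hxlt).2 ⟨htS, htmod⟩
      rw [hr] at h1
      omega
end

section
/- If x is a positive natural number with Zeckendorf decomposition x = Σ_{i=2}^{k} b_i·f_i (b_i ∈ {0,1}, b_k = 1, b_i·b_{i+1} = 0), then β(x) = Σ_{i=2}^{k} b_i; that is, the Zeckendorf representation achieves the minimum number of Fibonacci summands among all representations of x as nonnegative-integer combinations of f_2, f_3, .... -/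
lemma lemB (M : Multiset ℕ) (h2 : ∀ i ∈ M, 2 ≤ i) (hnd : M.Nodup)
    (hadj : ∀ i, ¬(i ∈ M ∧ i + 1 ∈ M)) :
    (Nat.zeckendorf (M.map Nat.fib).sum).length = Multiset.card M := by
  set l := M.sort (· ≤ ·) with hl
  have hsorted : l.Pairwise (· ≤ ·) := M.pairwise_sort _
  have hmem : ∀ a, a ∈ l ↔ a ∈ M := fun a => M.mem_sort _
  have hnd' : l.Nodup := by
    rw [← Multiset.coe_nodup, Multiset.sort_eq]; exact hnd
  have hpw : l.Pairwise (fun a b => a + 2 ≤ b) := by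
    refine (hsorted.and hnd').imp_of_mem ?_
    intro a b ha hb hab
    obtain ⟨hle, hne⟩ := hab
    by_contra h
    have hb1 : b = a + 1 := by omega
    exact hadj a ⟨(hmem a).1 ha, hb1 ▸ (hmem b).1 hb⟩
  have h0 : (0 :: l).Pairwise (fun a b => a + 2 ≤ b) := by
    refine List.Pairwise.cons (fun b hb => ?_) hpw
    have := h2 b ((hmem b).1 hb); omega
  have hrep : (l.reverse).IsZeckendorfRep := by
    unfold List.IsZeckendorfRep
    have h1 : ((0 :: l).reverse).Pairwise (fun a b => b + 2 ≤ a) :=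
      List.pairwise_reverse.2 h0
    rw [List.reverse_cons] at h1
    exact h1.isChain
  have hsum : ((l.reverse).map Nat.fib).sum = (M.map Nat.fib).sum := by
    rw [List.map_reverse, List.sum_reverse]
    conv_rhs => rw [← Multiset.sort_eq M (· ≤ ·)]
    simp [← hl]
  have hz := Nat.zeckendorf_sum_fib hrep
  rw [hsum] at hz
  rw [hz, List.length_reverse]
  rw [← Multiset.length_sort (· ≤ ·) (s := M)]


lemma fib2mul (j : ℕ) : 2 * Nat.fib (j + 3) = Nat.fib (j + 4) + Nat.fib (j + 1) := by
  have h1 := Nat.fib_add_two (n := j + 2)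
  have h2 := Nat.fib_add_two (n := j + 1)
  simp only [show j + 2 + 2 = j + 4 from rfl, show j + 2 + 1 = j + 3 from rfl,
    show j + 1 + 2 = j + 3 from rfl, show j + 1 + 1 = j + 2 from rfl] at h1 h2
  omega

lemma lemA : ∀ (N : ℕ) (M : Multiset ℕ), (M.map (· + 2)).sum ≤ N → (∀ i ∈ M, 1 ≤ i) →
    (Nat.zeckendorf (M.map Nat.fib).sum).length ≤ Multiset.card M := by
  intro N
  induction N with
  | zero =>
    intro M hN h1
    have : M = 0 := by
      by_contra h
      obtain ⟨a, ha⟩ := Multiset.exists_mem_of_ne_zero h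
      have : a + 2 ≤ (M.map (· + 2)).sum := Multiset.single_le_sum (by simp) _ (Multiset.mem_map_of_mem _ ha)
      omega
    subst this; simp
  | succ N ih =>
    intro M hN h1
    have step : ∀ M' : Multiset ℕ, (M'.map Nat.fib).sum = (M.map Nat.fib).sum →
        (M'.map (· + 2)).sum + 1 ≤ (M.map (· + 2)).sum →
        Multiset.card M' ≤ Multiset.card M → (∀ i ∈ M', 1 ≤ i) →
        (Nat.zeckendorf (M.map Nat.fib).sum).length ≤ Multiset.card M := by
      intro M' hs hm hc h1'
      have := ih M' (by omega) h1'
      rw [hs] at this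
      omega
    by_cases hadj : ∃ i, i ∈ M ∧ i + 1 ∈ M
    · obtain ⟨i, hi, hi1⟩ := hadj
      have hi1' : i + 1 ∈ M.erase i := (Multiset.mem_erase_of_ne (by omega)).2 hi1
      have hdecomp : M = i ::ₘ (i + 1) ::ₘ (M.erase i).erase (i + 1) := by
        rw [Multiset.cons_erase hi1', Multiset.cons_erase hi]
      refine step ((i + 2) ::ₘ (M.erase i).erase (i + 1)) ?_ ?_ ?_ ?_
      · conv_rhs => rw [hdecomp]
        simp [Nat.fib_add_two]
        omega
      · conv_rhs => rw [hdecomp]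
        simp; omega
      · conv_rhs => rw [hdecomp]
        simp
      · intro j hj
        rcases Multiset.mem_cons.1 hj with h | h
        · omega
        · exact h1 j (by rw [hdecomp]; simp [Multiset.mem_cons, h])
    · push_neg at hadj
      by_cases hnd : M.Nodup
      · have hadj' : ∀ i, ¬(i ∈ M ∧ i + 1 ∈ M) := fun i h => hadj i h.1 h.2
        by_cases h1m : 1 ∈ M
        · by_cases h3m : 3 ∈ M
          · have h3' : 3 ∈ M.erase 1 := (Multiset.mem_erase_of_ne (by omega)).2 h3m
            have hdecomp : M = 1 ::ₘ 3 ::ₘ (M.erase 1).erase 3 := by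
              rw [Multiset.cons_erase h3', Multiset.cons_erase h1m]
            refine step (4 ::ₘ (M.erase 1).erase 3) ?_ ?_ ?_ ?_
            · conv_rhs => rw [hdecomp]
              simp [Nat.fib]
              omega
            · conv_rhs => rw [hdecomp]
              simp
              omega
            · conv_rhs => rw [hdecomp]
              simp
            · intro j hj
              rcases Multiset.mem_cons.1 hj with h | h
              · omega
              · exact h1 j (by rw [hdecomp]; simp [Multiset.mem_cons, h])
          · have h2m : 2 ∉ M := fun h => hadj 1 h1m h
            have h1e : 1 ∉ M.erase 1 := by
              rw [Multiset.nodup_iff_count_le_one] at hnd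
              rw [← Multiset.count_pos, Multiset.count_erase_self]
              have := hnd 1
              omega
            have hB := lemB (2 ::ₘ M.erase 1) ?_ ?_ ?_
            · have hsum : ((2 ::ₘ M.erase 1).map Nat.fib).sum = (M.map Nat.fib).sum := by
                conv_rhs => rw [← Multiset.cons_erase h1m]
                simp [Nat.fib]
              have hcard : Multiset.card (2 ::ₘ M.erase 1) = Multiset.card M := by
                conv_rhs => rw [← Multiset.cons_erase h1m]
                simp
              rw [hsum, hcard] at hB
              omega
            · intro j hj
              rcases Multiset.mem_cons.1 hj with h | h
              · omega
              · have hj1 : j ∈ M := Multiset.mem_of_mem_erase h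
                have := h1 j hj1
                rcases Nat.eq_or_lt_of_le this with h' | h'
                · exact absurd (h' ▸ h) h1e
                · omega
            · rw [Multiset.nodup_cons]
              refine ⟨?_, hnd.erase _⟩
              intro h
              exact h2m (Multiset.mem_of_mem_erase h)
            · intro i hi'
              obtain ⟨hia, hib⟩ := hi'
              rcases Multiset.mem_cons.1 hia with h | h
              · subst h
                rcases Multiset.mem_cons.1 hib with h' | h'
                · omega
                · exact h3m (Multiset.mem_of_mem_erase h')
              · rcases Multiset.mem_cons.1 hib with h' | h'
                · have : i = 1 := by omega
                  exact h1e (this ▸ h)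
                · exact hadj i (Multiset.mem_of_mem_erase h) (Multiset.mem_of_mem_erase h')
        · have hB := lemB M ?_ hnd hadj'
          · omega
          · intro j hj
            have := h1 j hj
            rcases Nat.eq_or_lt_of_le this with h' | h'
            · exact absurd (h' ▸ hj) h1m
            · omega
      · rw [Multiset.nodup_iff_count_le_one] at hnd
        push_neg at hnd
        obtain ⟨i, hcnt⟩ := hnd
        have hi : i ∈ M := by rw [← Multiset.count_pos]; omega
        have hi2 : i ∈ M.erase i := by
          rw [← Multiset.count_pos, Multiset.count_erase_self]; omega
        have hdecomp : M = i ::ₘ i ::ₘ (M.erase i).erase i := by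
          rw [Multiset.cons_erase hi2, Multiset.cons_erase hi]
        have hi1 : 1 ≤ i := h1 i hi
        have hrest1 : ∀ j ∈ (M.erase i).erase i, 1 ≤ j := by
          intro j hj
          exact h1 j (by rw [hdecomp]; simp [Multiset.mem_cons, hj])
        rcases Nat.lt_or_ge i 3 with h3 | h3
        · -- i = 1 or 2: {i,i} → {3}
          have hfib : Nat.fib 3 = Nat.fib i + Nat.fib i := by
            interval_cases i <;> simp [Nat.fib]
          refine step (3 ::ₘ (M.erase i).erase i) ?_ ?_ ?_ ?_
          · conv_rhs => rw [hdecomp]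
            simp [← add_assoc, ← hfib]
          · conv_rhs => rw [hdecomp]
            simp; omega
          · conv_rhs => rw [hdecomp]
            simp
          · intro j hj
            rcases Multiset.mem_cons.1 hj with h | h
            · omega
            · exact hrest1 j h
        · -- i ≥ 3: {i,i} → {i+1, i-2}
          obtain ⟨j, rfl⟩ : ∃ j, i = j + 3 := ⟨i - 3, by omega⟩
          refine step ((j + 4) ::ₘ (j + 1) ::ₘ (M.erase (j + 3)).erase (j + 3)) ?_ ?_ ?_ ?_
          · conv_rhs => rw [hdecomp]
            have := fib2mul j
            simp; omega
          · conv_rhs => rw [hdecomp]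
            simp; omega
          · conv_rhs => rw [hdecomp]
            simp
          · intro m hm
            rcases Multiset.mem_cons.1 hm with h | h
            · omega
            · rcases Multiset.mem_cons.1 h with h' | h'
              · omega
              · exact hrest1 m h'

theorem zeckendorf_is_minimal (x k : ℕ) (hx : 0 < x) (hk : 2 ≤ k) (b : ℕ → ℕ)
    (hb01 : ∀ i, b i ≤ 1) (hbk : b k = 1) (hcons : ∀ i, b i * b (i + 1) = 0)
    (hsum : x = ∑ i ∈ Finset.Icc 2 k, b i * Nat.fib i) :
    beta x = ∑ i ∈ Finset.Icc 2 k, b i := by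
  classical
  set S := (Finset.Icc 2 k).filter (fun i => b i = 1) with hS
  have hsum2 : x = ((S.val).map Nat.fib).sum := by
    rw [hsum]
    have : ∑ i ∈ S, Nat.fib i = ∑ i ∈ Finset.Icc 2 k, b i * Nat.fib i := by
      rw [hS, Finset.sum_filter]
      refine Finset.sum_congr rfl fun i _ => ?_
      have := hb01 i
      interval_cases h : b i <;> simp
    rw [← this]
    rfl
  have hcard : (∑ i ∈ Finset.Icc 2 k, b i) = Multiset.card S.val := by
    have : ∑ i ∈ S, 1 = ∑ i ∈ Finset.Icc 2 k, b i := by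
      rw [hS, Finset.sum_filter]
      refine Finset.sum_congr rfl fun i _ => ?_
      have := hb01 i
      interval_cases h : b i <;> simp
    rw [← this]
    simp
  have h2S : ∀ i ∈ S.val, 2 ≤ i := by
    intro i hi
    have := Finset.mem_filter.1 (Finset.mem_def.2 hi)
    exact (Finset.mem_Icc.1 this.1).1
  have hmemset : (∑ i ∈ Finset.Icc 2 k, b i) ∈ {c : ℕ | ∃ M : Multiset ℕ,
      (∀ i ∈ M, 2 ≤ i) ∧ (M.map Nat.fib).sum = x ∧ Multiset.card M = c} :=
    ⟨S.val, h2S, hsum2.symm, hcard.symm⟩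
  have hub : beta x ≤ ∑ i ∈ Finset.Icc 2 k, b i := Nat.sInf_le hmemset
  obtain ⟨M0, hM0a, hM0b, hM0c⟩ := Nat.sInf_mem (Set.nonempty_of_mem hmemset)
  have hlow := lemA ((M0.map (· + 2)).sum) M0 le_rfl (fun i hi => by have := hM0a i hi; omega)
  rw [hM0b] at hlow
  have hadjS : ∀ i, ¬(i ∈ S.val ∧ i + 1 ∈ S.val) := by
    intro i h
    have h1 := (Finset.mem_filter.1 (Finset.mem_def.2 h.1)).2
    have h2 := (Finset.mem_filter.1 (Finset.mem_def.2 h.2)).2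
    have := hcons i
    rw [h1, h2] at this
    omega
  have hz := lemB S.val h2S S.nodup hadjS
  rw [← hsum2] at hz
  have : beta x = sInf {c : ℕ | ∃ M : Multiset ℕ,
      (∀ i ∈ M, 2 ≤ i) ∧ (M.map Nat.fib).sum = x ∧ Multiset.card M = c} := rfl
  omega
end

section
/- For every positive natural number x, β(x) = β(x − f_{γ(x)}) + 1, where γ(x) is the largest index l with f_l ≤ x. -/
noncomputable def gamma (x : ℕ) : ℕ := sSup {l : ℕ | Nat.fib l ≤ x}

lemma gamma_bdd (x : ℕ) : BddAbove {l : ℕ | Nat.fib l ≤ x} := by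
  refine ⟨x + 5, fun l hl => ?_⟩
  simp only [Set.mem_setOf_eq] at hl
  by_cases h : 5 ≤ l
  · have := Nat.le_fib_self h; omega
  · omega

lemma gamma_mem (x : ℕ) : Nat.fib (gamma x) ≤ x :=
  Nat.sSup_mem ⟨0, by simp⟩ (gamma_bdd x)

lemma gamma_two_le (x : ℕ) (hx : 0 < x) : 2 ≤ gamma x :=
  le_csSup (gamma_bdd x) (by simp [Nat.fib_two]; omega)

lemma gamma_lt (x : ℕ) : x < Nat.fib (gamma x + 1) := by
  by_contra h
  push_neg at h
  have h2 : gamma x + 1 ≤ gamma x := le_csSup (gamma_bdd x) h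
  omega

lemma gamma_eq (x l : ℕ) (_hl : 2 ≤ l) (h1 : Nat.fib l ≤ x) (h2 : x < Nat.fib (l + 1)) :
    gamma x = l := by
  have hle : l ≤ gamma x := le_csSup (gamma_bdd x) h1
  have hmem := gamma_mem x
  by_contra hne
  have : l + 1 ≤ gamma x := by omega
  have := Nat.fib_mono this
  omega

noncomputable def Z : ℕ → ℕ := fun x =>
  if h : x = 0 then 0
  else
    have h1 : 1 ≤ Nat.fib (gamma x) := by
      have := gamma_two_le x (by omega)
      have := Nat.fib_pos.mpr (show 0 < gamma x by omega)
      omega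
    have : x - Nat.fib (gamma x) < x := by omega
    Z (x - Nat.fib (gamma x)) + 1
termination_by x => x
decreasing_by exact this

lemma Z_zero : Z 0 = 0 := by rw [Z.eq_def]; simp

lemma Z_pos (x : ℕ) (hx : 0 < x) : Z x = Z (x - Nat.fib (gamma x)) + 1 := by
  rw [Z.eq_def]; rw [dif_neg (by omega)]

lemma Zval (x l : ℕ) (hl : 2 ≤ l) (h1 : Nat.fib l ≤ x) (h2 : x < Nat.fib (l + 1)) :
    Z x = Z (x - Nat.fib l) + 1 := by
  have hfl : 0 < Nat.fib l := Nat.fib_pos.mpr (by omega)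
  rw [Z_pos x (by omega), gamma_eq x l hl h1 h2]
lemma claimC : ∀ g m u, 2 ≤ m → m < g → u < Nat.fib m →
    Z u ≤ Z (u + (Nat.fib g - Nat.fib m)) := by
  intro g
  induction g using Nat.strong_induction_on with
  | _ g IH =>
    intro m u hm hmg hu
    by_cases hA : m + 2 ≤ g
    · -- Case A: m ≤ g - 2
      obtain ⟨k, rfl⟩ : ∃ k, g = k + 2 := ⟨g - 2, by omega⟩
      have hmk : m ≤ k := by omega
      have hfib : Nat.fib (k + 2) = Nat.fib k + Nat.fib (k + 1) := Nat.fib_add_two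
      have hmono : Nat.fib m ≤ Nat.fib k := Nat.fib_mono hmk
      have hmono2 : Nat.fib k ≤ Nat.fib (k + 1) := Nat.fib_mono (by omega)
      set w := u + (Nat.fib k - Nat.fib m) with hw
      have hv : u + (Nat.fib (k + 2) - Nat.fib m) = w + Nat.fib (k + 1) := by omega
      have hwlt : w < Nat.fib k := by omega
      have hZv : Z (w + Nat.fib (k + 1)) = Z w + 1 := by
        have h2 : w + Nat.fib (k + 1) < Nat.fib (k + 1 + 1) := by
          rw [show k + 1 + 1 = k + 2 from rfl]; omega
        have h3 := Zval (w + Nat.fib (k + 1)) (k + 1) (by omega) (by omega) h2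
        simpa using h3
      rw [hv, hZv]
      rcases eq_or_lt_of_le hmk with heq | hlt
      · have hwu : w = u := by rw [hw, heq]; omega
        rw [hwu]; omega
      · have h4 := IH k (by omega) m u hm hlt hu
        rw [← hw] at h4
        omega
    · -- Case B: g = m + 1
      have hg : g = m + 1 := by omega
      subst hg
      obtain ⟨j, rfl⟩ : ∃ j, m = j + 2 := ⟨m - 2, by omega⟩
      have hfib3 : Nat.fib (j + 3) = Nat.fib (j + 1) + Nat.fib (j + 2) := Nat.fib_add_two
      have hfib2 : Nat.fib (j + 2) = Nat.fib j + Nat.fib (j + 1) := Nat.fib_add_two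
      have hmj : Nat.fib j ≤ Nat.fib (j + 1) := Nat.fib_mono (by omega)
      rw [show j + 2 + 1 = j + 3 from rfl]
      have hgoal : u + (Nat.fib (j + 3) - Nat.fib (j + 2)) = u + Nat.fib (j + 1) := by omega
      rw [hgoal]
      by_cases hj : j = 0
      · subst hj
        have h1 : Nat.fib (0 + 2) = 1 := by decide
        have hu0 : u = 0 := by omega
        rw [hu0, Z_zero]; omega
      · by_cases hb : u + Nat.fib (j + 1) < Nat.fib (j + 2)
        · -- B-a
          have h3 := Zval (u + Nat.fib (j + 1)) (j + 1) (by omega) (by omega)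
            (by rw [show j + 1 + 1 = j + 2 from rfl]; omega)
          simp at h3
          omega
        · -- B-b : u ≥ fib j
          push_neg at hb
          have hub : Nat.fib j ≤ u := by omega
          have hZv : Z (u + Nat.fib (j + 1)) = Z (u - Nat.fib j) + 1 := by
            have h3 := Zval (u + Nat.fib (j + 1)) (j + 2) (by omega) hb
              (by rw [show j + 2 + 1 = j + 3 from rfl]; omega)
            rw [show u + Nat.fib (j + 1) - Nat.fib (j + 2) = u - Nat.fib j from by omega] at h3
            exact h3
          rw [hZv]
          by_cases hc : u < Nat.fib (j + 1)
          · -- then j ≥ 2 (j = 1 impossible)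
            by_cases hj1 : j = 1
            · exfalso
              subst hj1
              have e1 : Nat.fib 1 = 1 := by decide
              have e2 : Nat.fib (1 + 1) = 1 := by decide
              omega
            · have hZu : Z u = Z (u - Nat.fib j) + 1 :=
                Zval u j (by omega) hub (by rw [show j + 1 = j + 1 from rfl]; omega)
              omega
          · push_neg at hc
            by_cases hj1 : j = 1
            · subst hj1
              have e1 : Nat.fib 1 = 1 := by decide
              have e2 : Nat.fib (1 + 1) = 1 := by decide
              have e3 : Nat.fib (1 + 2) = 2 := by decide
              have hu1 : u = 1 := by omega
              subst hu1
              have hZ1 : Z 1 = Z 0 + 1 := by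
                have h3 := Zval 1 2 (by omega) (by decide) (by decide)
                rw [show 1 - Nat.fib 2 = 0 from by decide] at h3
                exact h3
              have z0 := Z_zero
              rw [show (1:ℕ) - Nat.fib 1 = 0 from by decide]
              omega
            · -- j ≥ 2
              have hZu : Z u = Z (u - Nat.fib (j + 1)) + 1 :=
                Zval u (j + 1) (by omega) hc (by rw [show j + 1 + 1 = j + 2 from rfl]; omega)
              have hu' : u - Nat.fib (j + 1) < Nat.fib j := by omega
              have hIH := IH (j + 1) (by omega) j (u - Nat.fib (j + 1)) (by omega) (by omega) hu'
              rw [show u - Nat.fib (j + 1) + (Nat.fib (j + 1) - Nat.fib j) = u - Nat.fib j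
                from by omega] at hIH
              omega
lemma lemmaL : ∀ x m, 2 ≤ m → Nat.fib m ≤ x → Z x ≤ Z (x - Nat.fib m) + 1 := by
  intro x
  induction x using Nat.strong_induction_on with
  | _ x IHx =>
    intro m hm hmx
    have hfm : 0 < Nat.fib m := Nat.fib_pos.mpr (by omega)
    have hx : 0 < x := by omega
    have hg1 := gamma_mem x
    have hg2 := gamma_lt x
    have hg3 := gamma_two_le x hx
    have hfg : 0 < Nat.fib (gamma x) := Nat.fib_pos.mpr (by omega)
    have hZx := Z_pos x hx
    have hmg : m ≤ gamma x := le_csSup (gamma_bdd x) hmx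
    rcases eq_or_lt_of_le hmg with heq | hlt
    · subst heq; omega
    · have hmono : Nat.fib m ≤ Nat.fib (gamma x) := Nat.fib_mono (by omega)
      by_cases hcase : Nat.fib (gamma x) + Nat.fib m ≤ x
      · have hIH := IHx (x - Nat.fib (gamma x)) (by omega) m hm (by omega)
        have hZy : Z (x - Nat.fib m) = Z (x - Nat.fib m - Nat.fib (gamma x)) + 1 :=
          Zval (x - Nat.fib m) (gamma x) hg3 (by omega) (by omega)
        rw [show x - Nat.fib (gamma x) - Nat.fib m = x - Nat.fib m - Nat.fib (gamma x)
          from by omega] at hIH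
        omega
      · have hu : x - Nat.fib (gamma x) < Nat.fib m := by omega
        have hC := claimC (gamma x) m (x - Nat.fib (gamma x)) hm hlt hu
        rw [show x - Nat.fib (gamma x) + (Nat.fib (gamma x) - Nat.fib m) = x - Nat.fib m
          from by omega] at hC
        omega

lemma exists_rep : ∀ x, ∃ M : Multiset ℕ,
    (∀ i ∈ M, 2 ≤ i) ∧ (M.map Nat.fib).sum = x ∧ M.card = Z x := by
  intro x
  induction x using Nat.strong_induction_on with
  | _ x IHx =>
    by_cases hx : x = 0
    · exact ⟨0, by simp [hx, Z_zero]⟩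
    · have hx' : 0 < x := by omega
      have hg1 := gamma_mem x
      have hg3 := gamma_two_le x hx'
      have hfg : 0 < Nat.fib (gamma x) := Nat.fib_pos.mpr (by omega)
      obtain ⟨M, hM1, hM2, hM3⟩ := IHx (x - Nat.fib (gamma x)) (by omega)
      refine ⟨gamma x ::ₘ M, ?_, ?_, ?_⟩
      · intro i hi
        rcases Multiset.mem_cons.mp hi with h | h
        · omega
        · exact hM1 i h
      · rw [Multiset.map_cons, Multiset.sum_cons, hM2]; omega
      · rw [Multiset.card_cons, hM3, Z_pos x hx']

lemma beta_le_Z (x : ℕ) : beta x ≤ Z x := by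
  obtain ⟨M, h1, h2, h3⟩ := exists_rep x
  exact Nat.sInf_le ⟨M, h1, h2, h3⟩

lemma Z_le_beta : ∀ x, Z x ≤ beta x := by
  intro x
  induction x using Nat.strong_induction_on with
  | _ x IHx =>
    by_cases hx : x = 0
    · simp [hx, Z_zero]
    · have hne : {k : ℕ | ∃ M : Multiset ℕ,
          (∀ i ∈ M, 2 ≤ i) ∧ (M.map Nat.fib).sum = x ∧ M.card = k}.Nonempty := by
        obtain ⟨M, h1, h2, h3⟩ := exists_rep x
        exact ⟨M.card, M, h1, h2, rfl⟩
      obtain ⟨M, hM1, hM2, hM3⟩ := Nat.sInf_mem hne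
      have hMne : M ≠ 0 := by
        rintro rfl
        simp at hM2
        omega
      obtain ⟨m, hmM⟩ := Multiset.exists_mem_of_ne_zero hMne
      have hm2 : 2 ≤ m := hM1 m hmM
      have hfmx : Nat.fib m ≤ x := by
        rw [← hM2]
        exact Multiset.single_le_sum (fun y _ => Nat.zero_le y) _
          (Multiset.mem_map_of_mem Nat.fib hmM)
      have hfm : 0 < Nat.fib m := Nat.fib_pos.mpr (by omega)
      have hcons : m ::ₘ M.erase m = M := Multiset.cons_erase hmM
      have herase_sum : ((M.erase m).map Nat.fib).sum = x - Nat.fib m := by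
        have : ((m ::ₘ M.erase m).map Nat.fib).sum = x := by rw [hcons]; exact hM2
        rw [Multiset.map_cons, Multiset.sum_cons] at this
        omega
      have hbe : beta (x - Nat.fib m) ≤ (M.erase m).card := by
        refine Nat.sInf_le ⟨M.erase m, fun i hi => hM1 i (Multiset.mem_of_mem_erase hi),
          herase_sum, rfl⟩
      have hcard := congrArg Multiset.card hcons
      rw [Multiset.card_cons] at hcard
      have hbx : beta x = Multiset.card M := hM3.symm
      have hIH := IHx (x - Nat.fib m) (by omega)
      have hL := lemmaL x m hm2 hfmx
      omega

theorem beta_recurrence (x : ℕ) (hx : 0 < x) :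
    beta x = beta (x - Nat.fib (gamma x)) + 1 := by
  have h1 : beta x = Z x := le_antisymm (beta_le_Z x) (Z_le_beta x)
  have h2 : beta (x - Nat.fib (gamma x)) = Z (x - Nat.fib (gamma x)) :=
    le_antisymm (beta_le_Z _) (Z_le_beta _)
  rw [h1, h2, Z_pos x hx]
end

section
/- For every natural number a ≥ 1, β(f_a − 1) = ⌊(a−1)/2⌋. -/
namespace BetaFib

open Nat

lemma lt_fib_add_two (n : ℕ) : n < fib (n + 2) := by
  induction n with
  | zero => simp
  | succ n ih =>
    have h1 : 1 ≤ fib (n + 1) := fib_pos.mpr (Nat.succ_pos n)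
    have h2 : fib (n + 3) = fib (n + 1) + fib (n + 2) := fib_add_two
    show n + 1 < fib (n + 3)
    omega

/-- The greatest index `t` with `fib t ≤ x` (junk value when `x = 0`). -/
def topIdx (x : ℕ) : ℕ := Nat.findGreatest (fun n => Nat.fib n ≤ x) (x + 2)

lemma topIdx_ge (x : ℕ) (hx : 1 ≤ x) : 2 ≤ topIdx x :=
  Nat.le_findGreatest (by omega) (by show fib 2 ≤ x; rw [fib_two]; exact hx)

lemma topIdx_fib_le (x : ℕ) (hx : 1 ≤ x) : fib (topIdx x) ≤ x := by
  have h := Nat.findGreatest_spec (P := fun n => Nat.fib n ≤ x) (n := x + 2)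
    (m := 2) (by omega) (by show fib 2 ≤ x; rw [fib_two]; exact hx)
  exact h

lemma topIdx_lt (x : ℕ) (hx : 1 ≤ x) : x < fib (topIdx x + 1) := by
  have hle : topIdx x ≤ x + 2 := Nat.findGreatest_le _
  have hne : topIdx x ≠ x + 2 := by
    intro h
    have h1 := topIdx_fib_le x hx
    rw [h] at h1
    have := lt_fib_add_two x
    omega
  by_contra h
  push_neg at h
  exact Nat.findGreatest_is_greatest (P := fun n => Nat.fib n ≤ x)
    (by omega : topIdx x < topIdx x + 1) (by omega) h

lemma topIdx_eq {x t : ℕ} (ht : 2 ≤ t) (h1 : fib t ≤ x) (h2 : x < fib (t + 1)) :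
    topIdx x = t := by
  have hx : 1 ≤ x := le_trans (fib_pos.mpr (by omega)) h1
  have hT2 := topIdx_ge x hx
  have hTle := topIdx_fib_le x hx
  have hTlt := topIdx_lt x hx
  by_contra hne
  rcases lt_or_gt_of_ne hne with h | h
  · have := fib_mono (by omega : topIdx x + 1 ≤ t)
    omega
  · have := fib_mono (by omega : t + 1 ≤ topIdx x)
    omega

/-- Greedy (Zeckendorf) count of Fibonacci summands. -/
def zed : ℕ → ℕ
  | 0 => 0
  | (x + 1) => zed ((x + 1) - fib (topIdx (x + 1))) + 1
decreasing_by
  have h2 : 2 ≤ topIdx (x + 1) := topIdx_ge _ (by omega)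
  have h3 : 0 < fib (topIdx (x + 1)) := fib_pos.mpr (by omega)
  omega

lemma zed_zero : zed 0 = 0 := by rw [zed]

lemma zed_eq (x : ℕ) (hx : 1 ≤ x) : zed x = zed (x - fib (topIdx x)) + 1 := by
  rcases x with _ | n
  · omega
  · rw [zed]

/-- Prepending a Fibonacci number larger than the rest increases `zed` by at most 1. -/
lemma zed_add_fib {u t : ℕ} (ht : 2 ≤ t) (hu : u < fib t) :
    zed (u + fib t) ≤ zed u + 1 := by
  obtain ⟨s, rfl⟩ : ∃ s, t = s + 2 := ⟨t - 2, by omega⟩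
  have hfib : fib (s + 3) = fib (s + 1) + fib (s + 2) := fib_add_two
  have hfib2 : fib (s + 4) = fib (s + 2) + fib (s + 3) := fib_add_two
  have hpos : 0 < fib (s + 2) := fib_pos.mpr (by omega)
  by_cases hcase : u < fib (s + 1)
  · have htop : topIdx (u + fib (s + 2)) = s + 2 :=
      topIdx_eq (by omega) (by omega)
        (show u + fib (s + 2) < fib (s + 3) by omega)
    rw [zed_eq _ (by omega), htop]
    have h : u + fib (s + 2) - fib (s + 2) = u := by omega
    rw [h]
  · push_neg at hcase
    have hs : 1 ≤ s := by
      by_contra h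
      have hs0 : s = 0 := by omega
      subst hs0
      simp [fib_one, fib_two] at hcase hu
      omega
    have hp1 : 0 < fib (s + 1) := fib_pos.mpr (by omega)
    have htopu : topIdx u = s + 1 :=
      topIdx_eq (by omega) hcase (show u < fib (s + 2) from hu)
    have htopx : topIdx (u + fib (s + 2)) = s + 3 :=
      topIdx_eq (by omega) (by omega)
        (show u + fib (s + 2) < fib (s + 4) by omega)
    rw [zed_eq _ (by omega : 1 ≤ u + fib (s + 2)), htopx,
        zed_eq u (by omega), htopu]
    have h1 : u + fib (s + 2) - fib (s + 3) = u - fib (s + 1) := by omega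
    rw [h1]
    omega

/-- Key lemma: adding a single Fibonacci number increases `zed` by at most 1. -/
lemma zed_key (x : ℕ) : ∀ y j, y + fib j = x → zed x ≤ zed y + 1 := by
  induction x using Nat.strong_induction_on with
  | _ x IH =>
    intro y j hsum
    -- normalize j : either j = 0 or 2 ≤ j
    obtain ⟨j, hsum, hj⟩ : ∃ j', y + fib j' = x ∧ (j' = 0 ∨ 2 ≤ j') := by
      rcases j with _ | _ | j
      · exact ⟨0, hsum, Or.inl rfl⟩
      · refine ⟨2, ?_, Or.inr le_rfl⟩
        rw [fib_two]
        rw [fib_one] at hsum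
        exact hsum
      · exact ⟨j + 2, hsum, Or.inr (by omega)⟩
    rcases hj with rfl | hj
    · rw [fib_zero] at hsum
      have : x = y := by omega
      subst this
      omega
    rcases Nat.eq_zero_or_pos y with rfl | hy
    · -- x = fib j
      simp only [Nat.zero_add] at hsum
      subst hsum
      have hjpos : 0 < fib j := fib_pos.mpr (by omega)
      have htop : topIdx (fib j) = j :=
        topIdx_eq hj le_rfl (fib_lt_fib_succ hj)
      rw [zed_eq _ (by omega), htop, Nat.sub_self]
    · obtain ⟨g, hG⟩ : ∃ g, topIdx y = g + 2 := ⟨topIdx y - 2, by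
        have := topIdx_ge y hy; omega⟩
      have hfibley : fib (g + 2) ≤ y := by
        have := topIdx_fib_le y hy; rwa [hG] at this
      have hylt : y < fib (g + 3) := by
        have := topIdx_lt y hy
        rw [hG] at this
        exact this
      have hzy : zed y = zed (y - fib (g + 2)) + 1 := by
        rw [zed_eq y hy, hG]
      set y' := y - fib (g + 2) with hy'
      have hfg2 : fib (g + 2) = fib g + fib (g + 1) := fib_add_two
      have hfg3 : fib (g + 3) = fib (g + 1) + fib (g + 2) := fib_add_two
      have hfg4 : fib (g + 4) = fib (g + 2) + fib (g + 3) := fib_add_two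
      have hy'lt : y' < fib (g + 1) := by omega
      have hpos2 : 0 < fib (g + 2) := fib_pos.mpr (by omega)
      have hpos3 : 0 < fib (g + 3) := fib_pos.mpr (by omega)
      rcases lt_trichotomy j (g + 2) with hcmp | hcmp | hcmp
      · -- j ≤ g + 1
        rcases Nat.eq_or_lt_of_le (by omega : j ≤ g + 1) with hj1 | hj1
        · -- j = g + 1 : x = y' + fib (g + 3)
          have hx' : x = y' + fib (g + 3) := by
            subst hj1; omega
          have h := zed_add_fib (t := g + 3) (u := y') (by omega)
            (by
              have : fib (g + 1) ≤ fib (g + 3) := fib_mono (by omega)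
              omega)
          rw [← hx'] at h
          omega
        · -- j ≤ g : x = (y' + fib j) + fib (g + 2)
          have hjg : j ≤ g := by omega
          have hfj : fib j ≤ fib g := fib_mono hjg
          have hx' : x = (y' + fib j) + fib (g + 2) := by omega
          have hult : y' + fib j < fib (g + 2) := by omega
          have h1 : zed (y' + fib j) ≤ zed y' + 1 :=
            IH (y' + fib j) (by omega) y' j rfl
          have h2 := zed_add_fib (t := g + 2) (u := y' + fib j) (by omega) hult
          rw [← hx'] at h2
          omega
      · -- j = g + 2 : x = (y' + fib g) + fib (g + 3)
        subst hcmp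
        have hx' : x = (y' + fib g) + fib (g + 3) := by omega
        have hult : y' + fib g < fib (g + 3) := by omega
        have h1 : zed (y' + fib g) ≤ zed y' + 1 :=
          IH (y' + fib g) (by omega) y' g rfl
        have h2 := zed_add_fib (t := g + 3) (u := y' + fib g) (by omega) hult
        rw [← hx'] at h2
        omega
      · -- g + 3 ≤ j : prepend directly, y < fib (g + 3) ≤ fib j
        have hyfj : y < fib j := lt_of_lt_of_le hylt (fib_mono (by omega))
        have h := zed_add_fib (t := j) (u := y) hj hyfj
        rw [hsum] at h
        exact h

/-- Lower bound: every representation has at least `zed x` summands. -/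
lemma zed_le_card (x : ℕ) : ∀ M : Multiset ℕ, (∀ i ∈ M, 2 ≤ i) →
    (M.map Nat.fib).sum = x → zed x ≤ M.card := by
  induction x using Nat.strong_induction_on with
  | _ x IH =>
    intro M hM hsum
    rcases Multiset.empty_or_exists_mem M with rfl | ⟨i, hi⟩
    · simp at hsum
      subst hsum
      simp [zed_zero]
    · obtain ⟨M', rfl⟩ := Multiset.exists_cons_of_mem hi
      have hi2 : 2 ≤ i := hM i (Multiset.mem_cons_self i M')
      have hfi : 0 < fib i := fib_pos.mpr (by omega)
      rw [Multiset.map_cons, Multiset.sum_cons] at hsum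
      have hkey : zed x ≤ zed ((M'.map Nat.fib).sum) + 1 :=
        zed_key x ((M'.map Nat.fib).sum) i (by omega)
      have hrec : zed ((M'.map Nat.fib).sum) ≤ M'.card :=
        IH ((M'.map Nat.fib).sum) (by omega) M'
          (fun i hi => hM i (Multiset.mem_cons_of_mem hi)) rfl
      rw [Multiset.card_cons]
      omega

lemma zed_fib_sub_one (a : ℕ) : zed (fib a - 1) = (a - 1) / 2 := by
  induction a using Nat.strong_induction_on with
  | _ a IH =>
    match a with
    | 0 => simp [zed_zero]
    | 1 => simp [zed_zero]
    | 2 => simp [zed_zero]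
    | (m + 3) =>
      have h1 : 0 < fib (m + 1) := fib_pos.mpr (by omega)
      have h2 : 0 < fib (m + 2) := fib_pos.mpr (by omega)
      have hfg3 : fib (m + 3) = fib (m + 1) + fib (m + 2) := fib_add_two
      have htop : topIdx (fib (m + 3) - 1) = m + 2 :=
        topIdx_eq (by omega) (by omega)
          (show fib (m + 3) - 1 < fib (m + 3) by omega)
      rw [zed_eq _ (by omega), htop]
      have h3 : fib (m + 3) - 1 - fib (m + 2) = fib (m + 1) - 1 := by omega
      rw [h3, IH (m + 1) (by omega)]
      omega

/-- Explicit minimal representation of `fib a - 1`. -/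
def repM : ℕ → Multiset ℕ
  | 0 => 0
  | 1 => 0
  | 2 => 0
  | (n + 3) => (n + 2) ::ₘ repM (n + 1)

lemma repM_mem : ∀ a, ∀ i ∈ repM a, 2 ≤ i
  | 0 => by simp [repM]
  | 1 => by simp [repM]
  | 2 => by simp [repM]
  | (n + 3) => by
    intro i hi
    rw [repM, Multiset.mem_cons] at hi
    rcases hi with rfl | hi
    · omega
    · exact repM_mem (n + 1) i hi

lemma repM_sum : ∀ a, ((repM a).map Nat.fib).sum = fib a - 1
  | 0 => by simp [repM]
  | 1 => by simp [repM]
  | 2 => by simp [repM]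
  | (n + 3) => by
    rw [repM, Multiset.map_cons, Multiset.sum_cons, repM_sum (n + 1)]
    have h1 : 0 < fib (n + 1) := fib_pos.mpr (by omega)
    have hfg3 : fib (n + 3) = fib (n + 1) + fib (n + 2) := fib_add_two
    omega

lemma repM_card : ∀ a, (repM a).card = (a - 1) / 2
  | 0 => by simp [repM]
  | 1 => by simp [repM]
  | 2 => by simp [repM]
  | (n + 3) => by
    rw [repM, Multiset.card_cons, repM_card (n + 1)]
    omega

end BetaFib

theorem beta_fib_sub_one (a : ℕ) (ha : 1 ≤ a) :
    beta (Nat.fib a - 1) = (a - 1) / 2 := by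
  have hmem : (a - 1) / 2 ∈ {k : ℕ | ∃ M : Multiset ℕ,
      (∀ i ∈ M, 2 ≤ i) ∧ (M.map Nat.fib).sum = Nat.fib a - 1 ∧ M.card = k} :=
    ⟨BetaFib.repM a, BetaFib.repM_mem a, BetaFib.repM_sum a, BetaFib.repM_card a⟩
  refine le_antisymm (Nat.sInf_le hmem) (le_csInf ⟨_, hmem⟩ ?_)
  rintro k ⟨M, hM, hsum, rfl⟩
  have h := BetaFib.zed_le_card (Nat.fib a - 1) M hM hsum
  rwa [BetaFib.zed_fib_sub_one] at h
end

section
/- For a ≥ 2, the Frobenius number of S(a) (the largest natural number not in S(a)) equals ⌊(a−1)/2⌋·f_a − 1. -/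
namespace FrobHelp


def fs (l : List ℕ) : ℕ := (l.map Nat.fib).sum

@[simp] lemma fs_nil : fs [] = 0 := rfl
@[simp] lemma fs_cons (x : ℕ) (l : List ℕ) : fs (x :: l) = Nat.fib x + fs l := rfl
lemma fs_append (l₁ l₂ : List ℕ) : fs (l₁ ++ l₂) = fs l₁ + fs l₂ := by simp [fs]

lemma fs_erase {l : List ℕ} {x : ℕ} (hx : x ∈ l) : fs l = Nat.fib x + fs (l.erase x) := by
  have h := ((List.perm_cons_erase hx).map Nat.fib).sum_eq
  simpa [fs] using h

lemma len_erase {l : List ℕ} {x : ℕ} (hx : x ∈ l) : l.length = (l.erase x).length + 1 := by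
  simpa using (List.perm_cons_erase hx).length_eq

lemma sum_erase' {l : List ℕ} {x : ℕ} (hx : x ∈ l) : l.sum = x + (l.erase x).sum := by
  simpa using (List.perm_cons_erase hx).sum_eq

lemma fib_rec {a : ℕ} (h : 2 ≤ a) : Nat.fib a = Nat.fib (a-2) + Nat.fib (a-1) := by
  obtain ⟨b, rfl⟩ : ∃ b, a = b + 2 := ⟨a - 2, by omega⟩
  simp [Nat.fib_add_two]

lemma fib_one_le {n : ℕ} (h : 1 ≤ n) : 1 ≤ Nat.fib n := Nat.fib_pos.2 h

/-- Bound for "Zeckendorf-like" lists: indices in [1,M], no duplicate index,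
no consecutive indices, not both 1 and 3. -/
lemma NC : ∀ M : ℕ, 2 ≤ M → ∀ l : List ℕ, (∀ i ∈ l, 1 ≤ i ∧ i ≤ M) →
    (∀ x, ¬ (x ∈ l ∧ x ∈ l.erase x)) →
    (∀ x, ¬ (x ∈ l ∧ x + 1 ∈ l)) →
    ¬ (1 ∈ l ∧ 3 ∈ l) →
    fs l + 1 ≤ Nat.fib (M + 1) := by
  intro M
  induction M using Nat.strong_induction_on with
  | _ M ihM =>
    intro hM l hb h1 h2 h3
    by_cases hMl : M ∈ l
    · -- rest has indices ≤ M - 2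
      set r := l.erase M with hr
      have hsub : ∀ i ∈ r, i ∈ l := fun i hi => List.mem_of_mem_erase hi
      have hbr : ∀ i ∈ r, 1 ≤ i ∧ i ≤ M - 2 := by
        intro i hi
        have hil := hsub i hi
        have := hb i hil
        refine ⟨this.1, ?_⟩
        rcases Nat.lt_or_ge i (M-1) with h | h
        · omega
        · exfalso
          have hiM : i ≠ M := by
            rintro rfl; exact h1 _ ⟨hMl, hi⟩
          have : i = M - 1 := by omega
          subst this
          exact h2 (M-1) ⟨hil, by simpa [Nat.sub_add_cancel (by omega : 1 ≤ M)] using hMl⟩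
      have h1r : ∀ x, ¬ (x ∈ r ∧ x ∈ r.erase x) := by
        intro x ⟨hx1, hx2⟩
        have : x ∈ l.erase x := by
          rw [hr, List.erase_comm] at hx2
          exact List.mem_of_mem_erase hx2
        exact h1 x ⟨hsub x hx1, this⟩
      have h2r : ∀ x, ¬ (x ∈ r ∧ x + 1 ∈ r) := fun x ⟨hx1, hx2⟩ =>
        h2 x ⟨hsub x hx1, hsub _ hx2⟩
      have h3r : ¬ (1 ∈ r ∧ 3 ∈ r) := fun ⟨hx1, hx2⟩ => h3 ⟨hsub 1 hx1, hsub 3 hx2⟩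
      have hfse : fs l = Nat.fib M + fs r := fs_erase hMl
      by_cases hM3 : 4 ≤ M
      · have hrec := ihM (M-2) (by omega) (by omega) r hbr h1r h2r h3r
        have hM1 : Nat.fib (M+1) = Nat.fib (M-1) + Nat.fib M := by
          have := fib_rec (a := M+1) (by omega)
          simpa [Nat.add_sub_cancel] using this
        have : Nat.fib (M-2+1) = Nat.fib (M-1) := by
          congr 1; omega
        omega
      · have hrnil : r = [] := by
          rw [List.eq_nil_iff_forall_not_mem]
          intro x hx
          have hx' := hbr x hx
          have hx1 : x = 1 := by omega
          have hM3' : M = 3 := by omega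
          subst hx1; subst hM3'
          exact h3 ⟨hsub 1 hx, hMl⟩
        have hM23 : M = 2 ∨ M = 3 := by omega
        rcases hM23 with rfl | rfl
        · rw [hfse, hrnil]; simp; decide
        · rw [hfse, hrnil]; simp; decide
    · have hb' : ∀ i ∈ l, 1 ≤ i ∧ i ≤ M - 1 := by
        intro i hi
        have := hb i hi
        have : i ≠ M := fun h => hMl (h ▸ hi)
        omega
      by_cases hM2 : M = 2
      · subst hM2
        -- indices = 1 only, no dup → [] or [1]
        rcases l with _ | ⟨x, l'⟩
        · simp; decide
        · have hx := hb' x (by simp)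
          have hx1 : x = 1 := by omega
          subst hx1
          have : l' = [] := by
            rw [List.eq_nil_iff_forall_not_mem]
            intro y hy
            have := hb' y (by simp [hy])
            have hy1 : y = 1 := by omega
            subst hy1
            exact h1 1 ⟨by simp, by simpa using hy⟩
          subst this
          simp [Nat.fib]
      · have hrec := ihM (M-1) (by omega) (by omega) l hb' h1 h2 h3
        have : Nat.fib (M-1+1) = Nat.fib M := by congr 1; omega
        have := Nat.fib_mono (by omega : M ≤ M + 1)
        omega

lemma pred_mul {s : ℕ} (h : 1 ≤ s) (F : ℕ) : (s-1) * F + F = s * F := by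
  cases s with
  | zero => omega
  | succ n => simp [Nat.succ_sub_one, Nat.succ_mul]

lemma fib_dup {x : ℕ} (h : 2 ≤ x) :
    Nat.fib (x+1) + Nat.fib (x-2) = Nat.fib x + Nat.fib x := by
  obtain ⟨y, rfl⟩ : ∃ y, x = y + 2 := ⟨x - 2, by omega⟩
  simp [Nat.fib_add_two]
  omega

/-- Core counting lemma. -/
lemma core : ∀ μ : ℕ, ∀ (l : List ℕ) (a s : ℕ), 2 * l.length + l.sum = μ → 3 ≤ a → 1 ≤ s →
    (∀ i ∈ l, i ≤ a - 1) → fs l + 1 = s * Nat.fib a →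
    (a-1)/2 + 1 ≤ l.length + s := by
  intro μ
  induction μ using Nat.strong_induction_on with
  | _ μ ih =>
  intro l a s hμ ha hs hub hfib
  -- remove zero indices
  by_cases h0 : 0 ∈ l
  · have L1 := len_erase h0
    have S1 := sum_erase' h0
    have F1 := fs_erase h0
    have hf0 : Nat.fib 0 = 0 := rfl
    have hrec := ih (2*(l.erase 0).length + (l.erase 0).sum) (by omega) (l.erase 0) a s rfl
      ha hs (fun i hi => hub i (List.mem_of_mem_erase hi)) (by omega)
    omega
  have hpos : ∀ i ∈ l, 1 ≤ i := by
    intro i hi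
    rcases Nat.eq_zero_or_pos i with rfl | h
    · exact absurd hi h0
    · exact h
  have hpa : 1 ≤ Nat.fib a := fib_one_le (by omega)
  -- small a
  by_cases ha5 : a ≤ 4
  · have hfa2 : 2 ≤ Nat.fib a := by
      have h1 : Nat.fib 3 ≤ Nat.fib a := Nat.fib_mono (by omega)
      have h2 : Nat.fib 3 = 2 := by decide
      omega
    have hsf : Nat.fib a ≤ s * Nat.fib a := Nat.le_mul_of_pos_left _ hs
    have hlpos : l ≠ [] := by
      intro h
      subst h
      simp at hfib
      omega
    have : 1 ≤ l.length := List.length_pos_iff.2 hlpos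
    omega
  -- now a ≥ 5
  have ha5' : 5 ≤ a := by omega
  have e1 : Nat.fib a = Nat.fib (a-2) + Nat.fib (a-1) := fib_rec (by omega)
  have e2 : Nat.fib (a-1) = Nat.fib (a-3) + Nat.fib (a-2) := by
    have h := fib_rec (a := a-1) (by omega)
    have h1 : a-1-2 = a-3 := by omega
    have h2 : a-1-1 = a-2 := by omega
    rw [h1, h2] at h
    exact h
  have hp1 : 1 ≤ Nat.fib (a-1) := fib_one_le (by omega)
  have hp2 : 1 ≤ Nat.fib (a-2) := fib_one_le (by omega)
  have hp3 : 1 ≤ Nat.fib (a-3) := fib_one_le (by omega)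
  have hprod := pred_mul hs (Nat.fib a)
  -- Case A : two copies of a-1
  by_cases hA : (a-1) ∈ l ∧ (a-1) ∈ l.erase (a-1)
  · obtain ⟨hA1, hA2⟩ := hA
    have F1 := fs_erase hA1
    have F2 := fs_erase hA2
    have L1 := len_erase hA1
    have L2 := len_erase hA2
    have S1 := sum_erase' hA1
    have S2 := sum_erase' hA2
    have hs2 : 2 ≤ s := by
      rcases Nat.lt_or_ge s 2 with h | h
      · exfalso
        have hs1 : s = 1 := by omega
        subst hs1
        rw [one_mul] at hfib
        omega
      · exact h
    set l₂ := (l.erase (a-1)).erase (a-1) with hl₂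
    have hrec := ih (2*((a-3) :: l₂).length + ((a-3) :: l₂).sum)
      (by simp only [List.length_cons, List.sum_cons]; omega)
      ((a-3) :: l₂) a (s-1) rfl ha (by omega)
      (by
        intro i hi
        rcases List.mem_cons.1 hi with rfl | hi'
        · omega
        · exact hub i (List.mem_of_mem_erase (List.mem_of_mem_erase hi')))
      (by simp only [fs_cons]; omega)
    simp only [List.length_cons] at hrec
    omega
  -- Case B1 : one copy of a-1 and s = 1
  by_cases hB1 : (a-1) ∈ l ∧ s = 1
  · obtain ⟨hB, hs1⟩ := hB1
    subst hs1
    rw [one_mul] at hfib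
    have F1 := fs_erase hB
    have L1 := len_erase hB
    have S1 := sum_erase' hB
    set l₂ := l.erase (a-1) with hl₂
    have hfsl₂ : fs l₂ + 1 = Nat.fib (a-2) := by omega
    have hbound : ∀ i ∈ l₂, i ≤ (a-2) - 1 := by
      intro i hi
      by_contra hcon
      have hge : a - 2 ≤ i := by omega
      have hfge : Nat.fib (a-2) ≤ Nat.fib i := Nat.fib_mono hge
      have := fs_erase hi
      omega
    have hrec := ih (2*l₂.length + l₂.sum) (by omega) l₂ (a-2) 1 rfl (by omega) (by omega)
      hbound (by simpa using hfsl₂)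
    omega
  -- Case B2a : a-1 present together with a-2
  by_cases hB2a : (a-1) ∈ l ∧ (a-2) ∈ l.erase (a-1)
  · obtain ⟨hB, hB2⟩ := hB2a
    have hs2 : 2 ≤ s := by
      rcases Nat.lt_or_ge s 2 with h | h
      · exact absurd ⟨hB, by omega⟩ hB1
      · exact h
    have F1 := fs_erase hB
    have F2 := fs_erase hB2
    have L1 := len_erase hB
    have L2 := len_erase hB2
    have S1 := sum_erase' hB
    have S2 := sum_erase' hB2
    set l₃ := (l.erase (a-1)).erase (a-2) with hl₃
    have hrec := ih (2*l₃.length + l₃.sum) (by omega) l₃ a (s-1) rfl ha (by omega)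
      (fun i hi => hub i (List.mem_of_mem_erase (List.mem_of_mem_erase hi)))
      (by omega)
    omega
  -- Case dup : some index occurs twice
  by_cases hdup : ∃ x, x ∈ l ∧ x ∈ l.erase x
  · obtain ⟨x, hx1, hx2⟩ := hdup
    have hx1p : 1 ≤ x := hpos x hx1
    have hxne : x ≠ a - 1 := by
      rintro rfl
      exact hA ⟨hx1, hx2⟩
    have hxub : x ≤ a - 2 := by
      have := hub x hx1
      omega
    have F1 := fs_erase hx1
    have F2 := fs_erase hx2
    have L1 := len_erase hx1
    have L2 := len_erase hx2
    have S1 := sum_erase' hx1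
    have S2 := sum_erase' hx2
    set l₃ := (l.erase x).erase x with hl₃
    have hmem₃ : ∀ i ∈ l₃, i ≤ a - 1 :=
      fun i hi => hub i (List.mem_of_mem_erase (List.mem_of_mem_erase hi))
    by_cases hx3 : 3 ≤ x
    · have hid := fib_dup (x := x) (by omega)
      have hrec := ih (2*((x+1) :: (x-2) :: l₃).length + ((x+1) :: (x-2) :: l₃).sum)
        (by simp only [List.length_cons, List.sum_cons]; omega)
        ((x+1) :: (x-2) :: l₃) a s rfl ha hs
        (by
          intro i hi
          rcases List.mem_cons.1 hi with rfl | hi'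
          · omega
          rcases List.mem_cons.1 hi' with rfl | hi''
          · omega
          · exact hmem₃ i hi'')
        (by simp only [fs_cons]; omega)
      simp only [List.length_cons] at hrec
      omega
    · have hfx : Nat.fib x = 1 := by interval_cases x <;> decide
      have hf3 : Nat.fib 3 = 2 := by decide
      have hrec := ih (2*((3:ℕ) :: l₃).length + ((3:ℕ) :: l₃).sum)
        (by simp only [List.length_cons, List.sum_cons]; omega)
        ((3:ℕ) :: l₃) a s rfl ha hs
        (by
          intro i hi
          rcases List.mem_cons.1 hi with rfl | hi'
          · omega
          · exact hmem₃ i hi')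
        (by simp only [fs_cons]; omega)
      simp only [List.length_cons] at hrec
      omega
  -- Case cons : two consecutive indices
  by_cases hcons : ∃ x, x ∈ l ∧ x + 1 ∈ l
  · obtain ⟨x, hx1, hx2⟩ := hcons
    have hx1p : 1 ≤ x := hpos x hx1
    have hx2' : (x+1) ∈ l.erase x := (List.mem_erase_of_ne (by omega)).2 hx2
    have hxb : x + 2 ≤ a - 1 := by
      have hb1 := hub x hx1
      have hb2 := hub (x+1) hx2
      rcases Nat.lt_or_ge (x+1) (a-1) with h | h
      · omega
      · exfalso
        have hxa : x + 1 = a - 1 := by omega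
        refine hB2a ⟨by rw [← hxa]; exact hx2, ?_⟩
        have hxx : a - 2 = x := by omega
        rw [hxx]
        exact (List.mem_erase_of_ne (by omega)).2 hx1
    have F1 := fs_erase hx1
    have F2 := fs_erase hx2'
    have L1 := len_erase hx1
    have L2 := len_erase hx2'
    have S1 := sum_erase' hx1
    have S2 := sum_erase' hx2'
    set l₃ := (l.erase x).erase (x+1) with hl₃
    have hid : Nat.fib (x+2) = Nat.fib x + Nat.fib (x+1) := Nat.fib_add_two
    have hrec := ih (2*((x+2) :: l₃).length + ((x+2) :: l₃).sum)
      (by simp only [List.length_cons, List.sum_cons]; omega)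
      ((x+2) :: l₃) a s rfl ha hs
      (by
        intro i hi
        rcases List.mem_cons.1 hi with rfl | hi'
        · omega
        · exact hub i (List.mem_of_mem_erase (List.mem_of_mem_erase hi')))
      (by simp only [fs_cons]; omega)
    simp only [List.length_cons] at hrec
    omega
  -- Case 13 : indices 1 and 3 together
  by_cases h13 : 1 ∈ l ∧ 3 ∈ l
  · obtain ⟨h1l, h3l⟩ := h13
    have h3' : (3:ℕ) ∈ l.erase 1 := (List.mem_erase_of_ne (by omega)).2 h3l
    have F1 := fs_erase h1l
    have F2 := fs_erase h3'
    have L1 := len_erase h1l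
    have L2 := len_erase h3'
    have S1 := sum_erase' h1l
    have S2 := sum_erase' h3'
    set l₃ := (l.erase 1).erase 3 with hl₃
    have c1 : Nat.fib 1 = 1 := rfl
    have c3 : Nat.fib 3 = 2 := by decide
    have c4 : Nat.fib 4 = 3 := by decide
    have hrec := ih (2*((4:ℕ) :: l₃).length + ((4:ℕ) :: l₃).sum)
      (by simp only [List.length_cons, List.sum_cons]; omega)
      ((4:ℕ) :: l₃) a s rfl ha hs
      (by
        intro i hi
        rcases List.mem_cons.1 hi with rfl | hi'
        · omega
        · exact hub i (List.mem_of_mem_erase (List.mem_of_mem_erase hi')))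
      (by simp only [fs_cons]; omega)
    simp only [List.length_cons] at hrec
    omega
  -- Final : Zeckendorf-like list
  have hNCh1 : ∀ x, ¬(x ∈ l ∧ x ∈ l.erase x) := fun x hx => hdup ⟨x, hx⟩
  have hNCh2 : ∀ x, ¬(x ∈ l ∧ x + 1 ∈ l) := fun x hx => hcons ⟨x, hx⟩
  by_cases hBl : (a-1) ∈ l
  · have hs2 : 2 ≤ s := by
      rcases Nat.lt_or_ge s 2 with h | h
      · exact absurd ⟨hBl, by omega⟩ hB1
      · exact h
    have hNC := NC (a-1) (by omega) l (fun i hi => ⟨hpos i hi, hub i hi⟩) hNCh1 hNCh2 h13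
    have hfa : a - 1 + 1 = a := by omega
    rw [hfa] at hNC
    have h2s : 2 * Nat.fib a ≤ s * Nat.fib a := Nat.mul_le_mul_right _ hs2
    omega
  · have hbound : ∀ i ∈ l, 1 ≤ i ∧ i ≤ a - 2 := by
      intro i hi
      have h1 := hub i hi
      have h2 : i ≠ a - 1 := fun h => hBl (h ▸ hi)
      exact ⟨hpos i hi, by omega⟩
    have hNC := NC (a-2) (by omega) l hbound hNCh1 hNCh2 h13
    have hfa : a - 2 + 1 = a - 1 := by omega
    rw [hfa] at hNC
    have hsf : Nat.fib a ≤ s * Nat.fib a := Nat.le_mul_of_pos_left _ hs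
    omega

lemma fs_replicate (m i : ℕ) : fs (List.replicate m i) = m * Nat.fib i := by
  simp [fs, List.map_replicate, List.sum_replicate, smul_eq_mul]

/-- every element of `S a` decomposes with indices `≤ a-1`. -/
lemma mem_decomp {a : ℕ} (ha : 1 ≤ a) {x : ℕ} (hx : x ∈ S a) :
    ∃ l : List ℕ, (∀ i ∈ l, i ≤ a - 1) ∧ x = l.length * Nat.fib a + fs l := by
  induction hx using AddSubmonoid.closure_induction with
  | mem x hxs =>
    obtain ⟨n, rfl⟩ := hxs
    by_cases hn : n ≤ a - 1
    · exact ⟨[n], by simpa using hn, by simp⟩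
    · have hna : a ≤ n := by omega
      by_cases hk0 : n = a
      · subst hk0
        refine ⟨[0, 0], by simp, ?_⟩
        simp [Nat.fib]
        ring
      · set k := n - a with hkdef
        have hk1 : 1 ≤ k := by omega
        have hn' : n = k + (a-1) + 1 := by omega
        have hadd := Nat.fib_add k (a-1)
        have ha1 : a - 1 + 1 = a := by omega
        rw [ha1] at hadd
        rw [← hn'] at hadd
        have hk' : Nat.fib (k+1) = Nat.fib (k-1) + Nat.fib k := by
          have h := fib_rec (a := k+1) (by omega)
          have h1 : k+1-2 = k-1 := by omega
          have h2 : k+1-1 = k := by omega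
          rw [h1, h2] at h
          exact h
        refine ⟨List.replicate (Nat.fib k) (a-1) ++ List.replicate (Nat.fib (k-1) + 1) 0, ?_, ?_⟩
        · intro i hi
          rcases List.mem_append.1 hi with h | h
          · rw [List.eq_of_mem_replicate h]
          · rw [List.eq_of_mem_replicate h]; omega
        · rw [fs_append, fs_replicate, fs_replicate, List.length_append,
            List.length_replicate, List.length_replicate]
          have hf0 : Nat.fib 0 = 0 := rfl
          rw [hadd, hk', hf0]
          ring
  | zero => exact ⟨[], by simp, by simp⟩
  | add x y hx hy ihx ihy =>
    obtain ⟨l₁, hb₁, he₁⟩ := ihx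
    obtain ⟨l₂, hb₂, he₂⟩ := ihy
    refine ⟨l₁ ++ l₂, ?_, ?_⟩
    · intro i hi
      rcases List.mem_append.1 hi with h | h
      · exact hb₁ i h
      · exact hb₂ i h
    · rw [List.length_append, fs_append, he₁, he₂]
      ring

lemma list_mem_S (a : ℕ) : ∀ l : List ℕ, l.length * Nat.fib a + fs l ∈ S a := by
  intro l
  induction l with
  | nil => simpa using (S a).zero_mem
  | cons x l ihl =>
    have hgen : Nat.fib a + Nat.fib x ∈ S a := AddSubmonoid.subset_closure ⟨x, rfl⟩
    have h := (S a).add_mem hgen ihl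
    convert h using 1
    simp [fs_cons, List.length_cons]
    ring

lemma zeck : ∀ b r : ℕ, r < Nat.fib b → ∃ l : List ℕ, fs l = r ∧ l.length ≤ (b-1)/2 := by
  intro b
  induction b using Nat.strong_induction_on with
  | _ b ihb =>
  intro r hr
  by_cases hb : b ≤ 2
  · have : Nat.fib b ≤ 1 := by interval_cases b <;> decide
    have hr0 : r = 0 := by omega
    exact ⟨[], by simp [hr0], by simp⟩
  · have hb3 : 3 ≤ b := by omega
    by_cases hrc : r < Nat.fib (b-1)
    · obtain ⟨l, h1, h2⟩ := ihb (b-1) (by omega) r hrc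
      exact ⟨l, h1, by omega⟩
    · have he := fib_rec (a := b) (by omega)
      have hrb : r - Nat.fib (b-1) < Nat.fib (b-2) := by omega
      obtain ⟨l, h1, h2⟩ := ihb (b-2) (by omega) _ hrb
      refine ⟨(b-1) :: l, ?_, ?_⟩
      · simp only [fs_cons, h1]; omega
      · simp only [List.length_cons]; omega

lemma mem_of_ge {a : ℕ} (ha : 1 ≤ a) {n : ℕ} (hn : ((a-1)/2) * Nat.fib a ≤ n) : n ∈ S a := by
  have hF1 : 1 ≤ Nat.fib a := fib_one_le (by omega)
  have hqr : Nat.fib a * (n / Nat.fib a) + n % Nat.fib a = n := Nat.div_add_mod n (Nat.fib a)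
  set q := n / Nat.fib a with hq
  set r := n % Nat.fib a with hr
  have hrF : r < Nat.fib a := Nat.mod_lt _ (by omega)
  obtain ⟨l, hfs, hlen⟩ := zeck a r hrF
  have hdq : (a-1)/2 ≤ q := (Nat.le_div_iff_mul_le (by omega)).2 hn
  have hlq : l.length ≤ q := le_trans hlen hdq
  have h1 : l.length * Nat.fib a + fs l ∈ S a := list_mem_S a l
  have hgenF : Nat.fib a ∈ S a := AddSubmonoid.subset_closure ⟨0, by simp [Nat.fib]⟩
  have h2 : (q - l.length) • Nat.fib a ∈ S a := (S a).nsmul_mem hgenF _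
  have h3 := (S a).add_mem h1 h2
  have heq : n = l.length * Nat.fib a + fs l + (q - l.length) • Nat.fib a := by
    rw [smul_eq_mul]
    have hsub : (q - l.length) * Nat.fib a + l.length * Nat.fib a = q * Nat.fib a := by
      rw [← Nat.add_mul]
      congr 1
      omega
    have hcomm : Nat.fib a * q = q * Nat.fib a := Nat.mul_comm _ _
    omega
  rw [heq]
  exact h3

end FrobHelp

open FrobHelp in
theorem frobenius_S (a : ℕ) (ha : 2 ≤ a) :
    sSup {n : ℕ | n ∉ S a} = ((a - 1) / 2) * Nat.fib a - 1 := by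
  rcases eq_or_lt_of_le ha with h2 | h3
  · -- a = 2
    subst h2
    have hall : ∀ n : ℕ, n ∈ S 2 := by
      intro n
      have h1 : (1 : ℕ) ∈ S 2 := AddSubmonoid.subset_closure ⟨0, by decide⟩
      simpa using (S 2).nsmul_mem h1 n
    have hempty : {n : ℕ | n ∉ S 2} = ∅ := by
      ext n; simp [hall n]
    rw [hempty, csSup_empty]
    simp [Nat.fib]
  · have ha3 : 3 ≤ a := h3
    have hF1 : 1 ≤ Nat.fib a := fib_one_le (by omega)
    have hd1 : 1 ≤ (a-1)/2 := by omega
    have hnotin : ((a-1)/2 * Nat.fib a - 1) ∉ S a := by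
      intro hmem
      obtain ⟨l, hb, heq⟩ := mem_decomp (by omega) hmem
      have hd1F : 1 ≤ (a-1)/2 * Nat.fib a := by
        calc 1 = 1 * 1 := by ring
        _ ≤ (a-1)/2 * Nat.fib a := Nat.mul_le_mul hd1 hF1
      have htd : l.length < (a-1)/2 := by
        by_contra h
        push_neg at h
        have : (a-1)/2 * Nat.fib a ≤ l.length * Nat.fib a := Nat.mul_le_mul_right _ h
        omega
      have hsl : ((a-1)/2 - l.length) * Nat.fib a + l.length * Nat.fib a
          = (a-1)/2 * Nat.fib a := by
        rw [← Nat.add_mul]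
        congr 1
        omega
      have hfib : fs l + 1 = ((a-1)/2 - l.length) * Nat.fib a := by omega
      have hcore := core _ l a ((a-1)/2 - l.length) rfl ha3 (by omega) hb hfib
      omega
    have hub : ∀ x ∈ {n : ℕ | n ∉ S a}, x ≤ (a-1)/2 * Nat.fib a - 1 := by
      intro x hx
      by_contra hcon
      push_neg at hcon
      have hd1F : 1 ≤ (a-1)/2 * Nat.fib a := by
        calc 1 = 1 * 1 := by ring
        _ ≤ (a-1)/2 * Nat.fib a := Nat.mul_le_mul hd1 hF1
      exact hx (mem_of_ge (by omega) (by omega))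
    exact le_antisymm (csSup_le ⟨_, hnotin⟩ hub)
      (le_csSup ⟨_, fun x hx => hub x hx⟩ hnotin)
end

section
/- For a ≥ 3, the genus of S(a) equals Σ_{i=1}^{⌊(a−1)/2⌋} i·C(a−1−i, i), where C denotes the binomial coefficient. -/
open Nat Finset

/-- Number of terms in the Zeckendorf representation. -/
def Zg (x : ℕ) : ℕ := (Nat.zeckendorf x).length

lemma Zg_zero : Zg 0 = 0 := by simp [Zg]

lemma greatestFib_eq {b u : ℕ} (hu : u < Nat.fib (b + 1)) :
    Nat.greatestFib (Nat.fib (b + 2) + u) = b + 2 := by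
  have h1 : Nat.fib (b + 2) ≤ Nat.fib (b + 2) + u := Nat.le_add_right _ _
  have h2 : Nat.fib (b + 2) + u < Nat.fib (b + 3) := by
    have : Nat.fib (b + 3) = Nat.fib (b + 1) + Nat.fib (b + 2) := Nat.fib_add_two
    omega
  have hle : b + 2 ≤ Nat.greatestFib (Nat.fib (b + 2) + u) := Nat.le_greatestFib.2 h1
  have hlt : Nat.greatestFib (Nat.fib (b + 2) + u) < b + 3 := Nat.greatestFib_lt.2 h2
  omega

/-- Greedy step for `Zg`. -/
lemma Zg_eq {b u : ℕ} (hu : u < Nat.fib (b + 1)) :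
    Zg (Nat.fib (b + 2) + u) = Zg u + 1 := by
  have hpos : 0 < Nat.fib (b + 2) + u := by
    have : 0 < Nat.fib (b + 2) := Nat.fib_pos.2 (by omega)
    omega
  rw [Zg, Nat.zeckendorf_of_pos hpos, greatestFib_eq hu]
  simp [Zg]

/-- Decomposition of a positive natural. -/
lemma exists_decomp {x : ℕ} (hx : x ≠ 0) :
    ∃ b u, x = Nat.fib (b + 2) + u ∧ u < Nat.fib (b + 1) := by
  have hg2 : 2 ≤ Nat.greatestFib x := Nat.le_greatestFib.2 (by simpa [Nat.fib] using Nat.one_le_iff_ne_zero.2 hx)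
  obtain ⟨b, hb⟩ : ∃ b, Nat.greatestFib x = b + 2 := ⟨Nat.greatestFib x - 2, by omega⟩
  refine ⟨b, x - Nat.fib (b + 2), ?_, ?_⟩
  · have := Nat.fib_greatestFib_le x
    rw [hb] at this; omega
  · have h1 := Nat.lt_fib_greatestFib_add_one x
    rw [hb, show b + 2 + 1 = b + 3 from rfl] at h1
    have h2 := Nat.fib_greatestFib_le x
    rw [hb] at h2
    have h3 : Nat.fib (b + 3) = Nat.fib (b + 1) + Nat.fib (b + 2) := Nat.fib_add_two
    omega

lemma fib_index_lt {m k : ℕ} (h : Nat.fib m < Nat.fib k) : m < k := by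
  by_contra h2
  push_neg at h2
  exact absurd (Nat.fib_mono h2) (by omega)

lemma Zg_fib_le (n : ℕ) : Zg (Nat.fib n) ≤ 1 := by
  match n with
  | 0 => simp [Zg_zero]
  | 1 =>
    have h := Zg_eq (b := 0) (u := 0) (by simp [Nat.fib])
    simp only [Nat.add_zero] at h
    rw [show Nat.fib 1 = Nat.fib (0+2) by rfl, h, Zg_zero]
  | (m+2) =>
    have h := Zg_eq (b := m) (u := 0) (Nat.fib_pos.2 (by omega))
    simp only [Nat.add_zero] at h
    simp [h, Zg_zero]

lemma Zg_le_self (x : ℕ) : Zg x ≤ x := by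
  induction x using Nat.strong_induction_on with
  | _ x IH =>
    rcases eq_or_ne x 0 with rfl | hx
    · simp [Zg_zero]
    · obtain ⟨b, u, rfl, hu⟩ := exists_decomp hx
      have hf : 0 < Nat.fib (b+2) := Nat.fib_pos.2 (by omega)
      have := IH u (by omega)
      rw [Zg_eq hu]
      omega

/-- Key minimality lemma: adding one Fibonacci number increases `Zg` by at most 1. -/
lemma Zg_add_fib_le (x n : ℕ) : Zg (x + Nat.fib n) ≤ Zg x + 1 := by
  induction x using Nat.strong_induction_on generalizing n with
  | _ x IH =>
  rcases Nat.eq_zero_or_pos (Nat.fib n) with hn0 | hnpos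
  · simp [hn0]
  rcases Nat.eq_zero_or_pos x with rfl | hxpos
  · simpa [Zg_zero] using Zg_fib_le n
  obtain ⟨n', hn'2, hfn⟩ : ∃ n', 2 ≤ n' ∧ Nat.fib n' = Nat.fib n := by
    match n with
    | 0 => simp at hnpos
    | 1 => exact ⟨2, le_refl _, rfl⟩
    | (m+2) => exact ⟨m+2, by omega, rfl⟩
  rw [← hfn] at hnpos ⊢
  have hs : x + Nat.fib n' ≠ 0 := by omega
  obtain ⟨b, w, hsw, hw⟩ := exists_decomp hs
  have Fb : Nat.fib (b+2) = Nat.fib b + Nat.fib (b+1) := Nat.fib_add_two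
  have Fb1 : Nat.fib (b+3) = Nat.fib (b+1) + Nat.fib (b+2) := Nat.fib_add_two
  rcases lt_trichotomy (Nat.fib n') (Nat.fib (b+2)) with hlt | heq | hgt
  · -- main case : fib n' < fib (b+2)
    have hnb1 : n' < b + 2 := fib_index_lt hlt
    have hnble : Nat.fib n' ≤ Nat.fib (b+1) := Nat.fib_mono (by omega)
    obtain ⟨c, u, hxu, hu⟩ := exists_decomp (by omega : x ≠ 0)
    have Fc : Nat.fib (c+2) = Nat.fib c + Nat.fib (c+1) := Nat.fib_add_two
    have hcb : c ≤ b := by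
      by_contra h2
      push_neg at h2
      have h3 : Nat.fib (b+3) ≤ Nat.fib (c+2) := Nat.fib_mono (by omega)
      omega
    rcases eq_or_lt_of_le hcb with rfl | hclt
    · -- c = b
      have hwu : w = u + Nat.fib n' := by omega
      have h1 : Zg (u + Nat.fib n') ≤ Zg u + 1 := IH u (by omega) n'
      rw [hsw, Zg_eq hw, hxu, Zg_eq hu, hwu]
      omega
    · rcases eq_or_lt_of_le (by omega : c + 1 ≤ b) with hb | hb2
      · -- b = c + 1
        subst hb
        -- equation : fib(c+2) + u + fib n' = fib(c+3) + w, so u + fib n' = fib(c+1) + w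
        have Fc1 : Nat.fib (c+3) = Nat.fib (c+1) + Nat.fib (c+2) := Nat.fib_add_two
        have heqn : u + Nat.fib n' = Nat.fib (c+1) + w := by
          rw [hxu] at hsw
          rw [show c + 1 + 2 = c + 3 from rfl] at hsw
          omega
        rcases lt_trichotomy (Nat.fib n') (Nat.fib (c+2)) with h1 | h1 | h1
        · have h1' : n' < c + 2 := fib_index_lt h1
          have h2 : Nat.fib n' ≤ Nat.fib (c+1) := Nat.fib_mono (by omega)
          rcases eq_or_lt_of_le h2 with h3 | h3
          · -- fib n' = fib (c+1) : w = u
            have huw : w = u := by omega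
            rw [hsw, show c + 1 + 2 = c + 3 from rfl, Zg_eq hw, hxu, Zg_eq hu, huw]
            omega
          · -- fib n' < fib (c+1) ≤ fib c case
            have h4 : n' < c + 1 := fib_index_lt h3
            have h5 : Nat.fib n' ≤ Nat.fib c := Nat.fib_mono (by omega)
            have hc1 : 1 ≤ c := by
              by_contra hc
              push_neg at hc
              interval_cases c <;> simp_all [Nat.fib]
            obtain ⟨d, rfl⟩ : ∃ d, c = d + 1 := ⟨c - 1, by omega⟩
            -- y = u + fib n' = fib (d+2) + w with w < fib (d+1)
            have hy : u + Nat.fib n' = Nat.fib (d+2) + w := by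
              rw [show d + 1 + 1 = d + 2 from rfl] at heqn
              exact heqn
            have hwlt : w < Nat.fib (d+1) := by
              have Fd : Nat.fib (d+2) = Nat.fib d + Nat.fib (d+1) := Nat.fib_add_two
              have : Nat.fib n' ≤ Nat.fib (d+1) := h5
              omega
            have h6 : Zg (u + Nat.fib n') ≤ Zg u + 1 := IH u (by omega) n'
            rw [hy, Zg_eq hwlt] at h6
            rw [hsw, show d + 1 + 1 + 2 = d + 4 from rfl, Zg_eq hw, hxu, Zg_eq hu]
            omega
        · -- fib n' = fib (c+2) : w = u + fib c
          have hwu : w = u + Nat.fib c := by omega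
          have h2 : Zg (u + Nat.fib c) ≤ Zg u + 1 := IH u (by omega) c
          rw [hsw, show c + 1 + 2 = c + 3 from rfl] at *
          rw [Zg_eq hw, hxu, Zg_eq hu, hwu]
          omega
        · -- impossible: fib n' ≤ fib (b+1) = fib (c+2)
          rw [show c + 1 + 1 = c + 2 from rfl] at hnble
          omega
      · -- c + 2 ≤ b
        have hxlt : x < Nat.fib (c+3) := by
          have : Nat.fib (c+3) = Nat.fib (c+1) + Nat.fib (c+2) := Nat.fib_add_two
          omega
        have hxb1 : x < Nat.fib (b+1) := lt_of_lt_of_le hxlt (Nat.fib_mono (by omega))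
        have hfnb : Nat.fib b < Nat.fib n' := by omega
        have hfn' : Nat.fib n' = Nat.fib (b+1) := by
          have := Nat.fib_mono (show b + 1 ≤ n' by have := fib_index_lt hfnb; omega)
          omega
        have hxfw : x = Nat.fib b + w := by omega
        have hbc : b < c + 3 := fib_index_lt (by omega : Nat.fib b < Nat.fib (c+3))
        have hbe : b = c + 2 := by omega
        have huw : u = w := by rw [hbe] at hxfw; omega
        rw [hsw, Zg_eq hw, hxu, Zg_eq hu, huw]
        omega
  · -- fib n' = fib (b+2) : w = x
    have hwx : w = x := by omega
    rw [hsw, Zg_eq hw, hwx]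
  · -- impossible
    exfalso
    have h2 : b + 2 < n' := fib_index_lt hgt
    have h3 : Nat.fib (b+3) ≤ Nat.fib n' := Nat.fib_mono (by omega)
    omega

lemma Zg_add_le (u v : ℕ) : Zg (u + v) ≤ Zg u + Zg v := by
  induction v using Nat.strong_induction_on generalizing u with
  | _ v IH =>
  rcases eq_or_ne v 0 with rfl | hv
  · simp [Zg_zero]
  obtain ⟨b, v', rfl, hv'⟩ := exists_decomp hv
  have hf : 0 < Nat.fib (b+2) := Nat.fib_pos.2 (by omega)
  have h1 : u + (Nat.fib (b+2) + v') = (u + v') + Nat.fib (b+2) := by ring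
  rw [h1, Zg_eq hv']
  have h2 := Zg_add_fib_le (u + v') (b+2)
  have h3 := IH v' (by omega) u
  omega

lemma Zg_sub_fib {a w : ℕ} (ha : 3 ≤ a) (h1 : Nat.fib a ≤ w) (h2 : w < 2 * Nat.fib a) :
    Zg (w - Nat.fib a) ≤ Zg w := by
  obtain ⟨al, rfl⟩ : ∃ al, a = al + 3 := ⟨a - 3, by omega⟩
  have F0 : Nat.fib (al+2) = Nat.fib al + Nat.fib (al+1) := Nat.fib_add_two
  have F1 : Nat.fib (al+3) = Nat.fib (al+1) + Nat.fib (al+2) := Nat.fib_add_two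
  have F2 : Nat.fib (al+4) = Nat.fib (al+2) + Nat.fib (al+3) := Nat.fib_add_two
  rcases lt_or_ge w (Nat.fib (al+4)) with hc | hc
  · have hu : w - Nat.fib (al+3) < Nat.fib (al+2) := by omega
    have hZ := Zg_eq (b := al+1) hu
    rw [show al + 1 + 2 = al + 3 from rfl] at hZ
    have he : Nat.fib (al+3) + (w - Nat.fib (al+3)) = w := by omega
    rw [he] at hZ
    omega
  · set u := w - Nat.fib (al+4) with hu_def
    have hult : u < Nat.fib (al+1) := by omega
    have hZ1 := Zg_eq (b := al+2) (u := u) (by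
      show u < Nat.fib (al+3)
      have : Nat.fib (al+1) ≤ Nat.fib (al+3) := Nat.fib_mono (by omega)
      omega)
    rw [show al + 2 + 2 = al + 4 from rfl] at hZ1
    have he1 : Nat.fib (al+4) + u = w := by omega
    rw [he1] at hZ1
    have hZ2 := Zg_eq (b := al) hult
    have he2 : Nat.fib (al+2) + u = w - Nat.fib (al+3) := by omega
    rw [he2] at hZ2
    omega

/-- The characterizing predicate as an `AddSubmonoid`. -/
def T (a : ℕ) (ha : 3 ≤ a) : AddSubmonoid ℕ where
  carrier := {m : ℕ | ∃ q r, m = q * Nat.fib a + r ∧ r < Nat.fib a ∧ Zg r ≤ q}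
  zero_mem' := ⟨0, 0, by simp, Nat.fib_pos.2 (by omega), by simp [Zg_zero]⟩
  add_mem' := by
    rintro x y ⟨qx, rx, rfl, hrx, hzx⟩ ⟨qy, ry, rfl, hry, hzy⟩
    have hadd := Zg_add_le rx ry
    rcases lt_or_ge (rx + ry) (Nat.fib a) with hc | hc
    · exact ⟨qx + qy, rx + ry, by ring, hc, by omega⟩
    · refine ⟨qx + qy + 1, rx + ry - Nat.fib a, by ring_nf; omega, by omega, ?_⟩
      have := Zg_sub_fib ha hc (by omega)
      omega

lemma T_spec {a : ℕ} (ha : 3 ≤ a) (m : ℕ) :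
    m ∈ T a ha ↔ Zg (m % Nat.fib a) ≤ m / Nat.fib a := by
  have hfa : 0 < Nat.fib a := Nat.fib_pos.2 (by omega)
  constructor
  · rintro ⟨q, r, rfl, hr, hz⟩
    have h1 : (q * Nat.fib a + r) % Nat.fib a = r := by
      rw [Nat.add_comm, Nat.mul_comm, Nat.add_mul_mod_self_left, Nat.mod_eq_of_lt hr]
    have h2 : (q * Nat.fib a + r) / Nat.fib a = q := by
      rw [Nat.add_comm, Nat.mul_comm, Nat.add_mul_div_left _ _ hfa, Nat.div_eq_of_lt hr]
      omega
    rw [h1, h2]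
    exact hz
  · intro h
    refine ⟨m / Nat.fib a, m % Nat.fib a, ?_, Nat.mod_lt _ hfa, h⟩
    have h1 := Nat.div_add_mod m (Nat.fib a)
    have h2 : Nat.fib a * (m / Nat.fib a) = m / Nat.fib a * Nat.fib a := Nat.mul_comm _ _
    omega

lemma S_le_T {a : ℕ} (ha : 3 ≤ a) : S a ≤ T a ha := by
  have hfa : 0 < Nat.fib a := Nat.fib_pos.2 (by omega)
  have hfib_a_mem : Nat.fib a ∈ T a ha := ⟨1, 0, by ring, hfa, by simp [Zg_zero]⟩
  have hlt : Nat.fib (a - 1) < Nat.fib a := by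
    obtain ⟨al, rfl⟩ : ∃ al, a = al + 3 := ⟨a - 3, by omega⟩
    have := Nat.fib_lt_fib_succ (n := al + 2) (by omega)
    simpa using this
  have hfib_a1_mem : Nat.fib (a + 1) ∈ T a ha := by
    refine ⟨1, Nat.fib (a - 1), ?_, hlt, Zg_fib_le _⟩
    have : Nat.fib (a - 1 + 2) = Nat.fib (a - 1) + Nat.fib (a - 1 + 1) := Nat.fib_add_two
    have h2 : a - 1 + 2 = a + 1 := by omega
    have h3 : a - 1 + 1 = a := by omega
    rw [h2, h3] at this
    omega
  rw [S, AddSubmonoid.closure_le]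
  rintro m ⟨n, rfl⟩
  rcases lt_or_ge n a with hn | hn
  · -- small generators
    have h1 : Nat.fib n ≤ Nat.fib (a - 1) := Nat.fib_mono (by omega)
    exact ⟨1, Nat.fib n, by ring, by omega, Zg_fib_le _⟩
  · rcases Nat.eq_or_lt_of_le hn with rfl | hn2
    · exact ⟨2, 0, by ring, hfa, by simp [Zg_zero]⟩
    · obtain ⟨j, rfl⟩ : ∃ j, n = a + j + 1 := ⟨n - a - 1, by omega⟩
      have hid : Nat.fib (a + j + 1) = Nat.fib a * Nat.fib j + Nat.fib (a + 1) * Nat.fib (j + 1) :=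
        Nat.fib_add a j
      have : Nat.fib a + Nat.fib (a + j + 1)
          = (1 + Nat.fib j) * Nat.fib a + Nat.fib (j + 1) * Nat.fib (a + 1) := by
        rw [hid]; ring
      rw [this]
      have hm1 : (1 + Nat.fib j) • Nat.fib a ∈ T a ha := nsmul_mem hfib_a_mem _
      have hm2 : Nat.fib (j + 1) • Nat.fib (a + 1) ∈ T a ha := nsmul_mem hfib_a1_mem _
      rw [smul_eq_mul] at hm1
      rw [smul_eq_mul] at hm2
      exact add_mem hm1 hm2

lemma mem_S_of_s17 {a : ℕ} (ha : 3 ≤ a) :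
    ∀ r, r < Nat.fib a → ∀ q, Zg r ≤ q → q * Nat.fib a + r ∈ S a := by
  have hfa : 0 < Nat.fib a := Nat.fib_pos.2 (by omega)
  have hgen : Nat.fib a ∈ S a := AddSubmonoid.subset_closure ⟨0, by simp [Nat.fib]⟩
  intro r
  induction r using Nat.strong_induction_on with
  | _ r IH =>
  intro hr q hq
  rcases eq_or_ne r 0 with rfl | hrne
  · have hm : q • Nat.fib a ∈ S a := nsmul_mem hgen q
    rw [smul_eq_mul] at hm
    simpa using hm
  · obtain ⟨b, u, rfl, hu⟩ := exists_decomp hrne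
    have hfb : 0 < Nat.fib (b + 2) := Nat.fib_pos.2 (by omega)
    rw [Zg_eq hu] at hq
    obtain ⟨q', rfl⟩ : ∃ q', q = q' + 1 := ⟨q - 1, by omega⟩
    have hba : b + 2 < a := fib_index_lt (by omega)
    have hgen2 : Nat.fib a + Nat.fib (b + 2) ∈ S a := AddSubmonoid.subset_closure ⟨b + 2, rfl⟩
    have hule : u < Nat.fib a := by
      have : Nat.fib (b + 1) ≤ Nat.fib (b + 2) := Nat.fib_mono (by omega)
      omega
    have hmem := IH u (by omega) hule q' (by omega)
    have heq : (q' + 1) * Nat.fib a + (Nat.fib (b + 2) + u)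
        = (Nat.fib a + Nat.fib (b + 2)) + (q' * Nat.fib a + u) := by ring
    rw [heq]
    exact add_mem hgen2 hmem

lemma mem_S_iff_s17 {a : ℕ} (ha : 3 ≤ a) (m : ℕ) :
    m ∈ S a ↔ Zg (m % Nat.fib a) ≤ m / Nat.fib a := by
  have hfa : 0 < Nat.fib a := Nat.fib_pos.2 (by omega)
  constructor
  · intro hm
    exact (T_spec ha m).1 (S_le_T ha hm)
  · intro h
    have := mem_S_of_s17 ha (m % Nat.fib a) (Nat.mod_lt _ hfa) (m / Nat.fib a) h
    have heq : m / Nat.fib a * Nat.fib a + m % Nat.fib a = m := by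
      have h1 := Nat.div_add_mod m (Nat.fib a)
      have h2 : Nat.fib a * (m / Nat.fib a) = m / Nat.fib a * Nat.fib a := Nat.mul_comm _ _
      omega
    rwa [heq] at this

lemma Zg_one : Zg 1 = 1 := by
  have h := Zg_eq (b := 0) (u := 0) (by simp [Nat.fib])
  simpa [Zg_zero] using h

lemma card_gaps {a : ℕ} (ha : 3 ≤ a) :
    {m : ℕ | m ∉ S a}.ncard = ∑ r ∈ Finset.range (Nat.fib a), Zg r := by
  have hfa : 0 < Nat.fib a := Nat.fib_pos.2 (by omega)
  have hset : {m : ℕ | m ∉ S a} =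
      ↑((Finset.range (Nat.fib a * Nat.fib a)).filter
        (fun m => m / Nat.fib a < Zg (m % Nat.fib a))) := by
    ext m
    simp only [Set.mem_setOf_eq, mem_S_iff_s17 ha, Finset.coe_filter, Finset.mem_range,
      Set.mem_setOf_eq, not_le]
    constructor
    · intro h
      refine ⟨?_, h⟩
      have h1 : Zg (m % Nat.fib a) ≤ m % Nat.fib a := Zg_le_self _
      have h2 : m % Nat.fib a < Nat.fib a := Nat.mod_lt _ hfa
      have h3 : m / Nat.fib a < Nat.fib a := by omega
      exact (Nat.div_lt_iff_lt_mul hfa).1 h3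
    · exact fun h => h.2
  rw [hset, Set.ncard_coe_finset]
  have hcard : ((Finset.range (Nat.fib a)).sigma (fun r => Finset.range (Zg r))).card
      = ∑ r ∈ Finset.range (Nat.fib a), Zg r := by
    rw [Finset.card_sigma]
    simp
  rw [← hcard]
  apply Finset.card_bij'
    (i := fun m _ => (⟨m % Nat.fib a, m / Nat.fib a⟩ : Σ _ : ℕ, ℕ))
    (j := fun p _ => p.2 * Nat.fib a + p.1)
  · intro m hm
    simp only [Finset.mem_filter, Finset.mem_range] at hm
    simp only [Finset.mem_sigma, Finset.mem_range]
    exact ⟨Nat.mod_lt _ hfa, hm.2⟩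
  · rintro ⟨r, q⟩ hp
    simp only [Finset.mem_sigma, Finset.mem_range] at hp
    simp only [Finset.mem_filter, Finset.mem_range]
    have h1 : (q * Nat.fib a + r) % Nat.fib a = r := by
      rw [Nat.add_comm, Nat.mul_comm, Nat.add_mul_mod_self_left, Nat.mod_eq_of_lt hp.1]
    have h2 : (q * Nat.fib a + r) / Nat.fib a = q := by
      rw [Nat.add_comm, Nat.mul_comm, Nat.add_mul_div_left _ _ hfa, Nat.div_eq_of_lt hp.1]
      omega
    refine ⟨?_, by rw [h1, h2]; exact hp.2⟩
    -- q * fib a + r < fib a * fib a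
    have hq : q < Nat.fib a := by
      have := Zg_le_self r
      omega
    calc q * Nat.fib a + r < (q + 1) * Nat.fib a := by
          rw [add_mul, one_mul]; omega
    _ ≤ Nat.fib a * Nat.fib a := by
          have : q + 1 ≤ Nat.fib a := hq
          exact Nat.mul_le_mul this (le_refl _)
  · intro m hm
    show m / Nat.fib a * Nat.fib a + m % Nat.fib a = m
    have := Nat.div_add_mod m (Nat.fib a)
    have h2 : Nat.fib a * (m / Nat.fib a) = m / Nat.fib a * Nat.fib a := Nat.mul_comm _ _
    omega
  · rintro ⟨r, q⟩ hp
    simp only [Finset.mem_sigma, Finset.mem_range] at hp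
    have h1 : (q * Nat.fib a + r) % Nat.fib a = r := by
      rw [Nat.add_comm, Nat.mul_comm, Nat.add_mul_mod_self_left, Nat.mod_eq_of_lt hp.1]
    have h2 : (q * Nat.fib a + r) / Nat.fib a = q := by
      rw [Nat.add_comm, Nat.mul_comm, Nat.add_mul_div_left _ _ hfa, Nat.div_eq_of_lt hp.1]
      omega
    simp [h1, h2]

/-- Sum of Zeckendorf lengths below `fib` values: recursion. -/
lemma sum_Zg_rec (n : ℕ) :
    ∑ r ∈ Finset.range (Nat.fib (n+3)), Zg r
      = (∑ r ∈ Finset.range (Nat.fib (n+2)), Zg r)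
        + ((∑ r ∈ Finset.range (Nat.fib (n+1)), Zg r) + Nat.fib (n+1)) := by
  have F : Nat.fib (n+3) = Nat.fib (n+2) + Nat.fib (n+1) := by
    have : Nat.fib (n+3) = Nat.fib (n+1) + Nat.fib (n+2) := Nat.fib_add_two
    omega
  rw [F, Finset.sum_range_add]
  congr 1
  have : ∀ u ∈ Finset.range (Nat.fib (n+1)), Zg (Nat.fib (n+2) + u) = Zg u + 1 := by
    intro u hu
    exact Zg_eq (Finset.mem_range.1 hu)
  rw [Finset.sum_congr rfl this, Finset.sum_add_distrib]
  simp

def Ef (m : ℕ) : ℕ := ∑ i ∈ Finset.range (m+1), Nat.choose (m - i) i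
def Ff (m : ℕ) : ℕ := ∑ i ∈ Finset.range (m+1), i * Nat.choose (m - i) i

lemma Ef_rec (m : ℕ) : Ef (m+2) = Ef (m+1) + Ef m := by
  have e2 : Ef (m+2) = (∑ i ∈ Finset.range (m+1), ((m - i) + 1).choose (i+1)) + 1 := by
    rw [Ef, Finset.sum_range_succ' (fun i => (m + 2 - i).choose i) (m+2)]
    rw [Finset.sum_range_succ]
    have h1 : (m + 2 - (m + 1 + 1)).choose (m + 1 + 1) = 0 := by
      have h0 : m + 2 - (m + 1 + 1) = 0 := by omega
      rw [h0]; exact Nat.choose_eq_zero_of_lt (by omega)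
    rw [h1]
    simp only [Nat.sub_zero, Nat.choose_zero_right, add_zero]
    congr 1
    apply Finset.sum_congr rfl
    intro i hi; rw [Finset.mem_range] at hi
    congr 1; omega
  have e1 : Ef (m+1) = (∑ i ∈ Finset.range (m+1), (m - i).choose (i+1)) + 1 := by
    rw [Ef, Finset.sum_range_succ' (fun i => (m + 1 - i).choose i) (m+1)]
    simp only [Nat.sub_zero, Nat.choose_zero_right]
    congr 1
    apply Finset.sum_congr rfl
    intro i hi; rw [Finset.mem_range] at hi
    congr 1; omega
  have e0 : Ef m = ∑ i ∈ Finset.range (m+1), (m - i).choose i := rfl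
  rw [e2, e1, e0]
  have hp : ∀ i ∈ Finset.range (m+1),
      ((m - i) + 1).choose (i+1) = (m - i).choose i + (m - i).choose (i+1) := by
    intro i _
    rw [Nat.choose_succ_succ']
  rw [Finset.sum_congr rfl hp, Finset.sum_add_distrib]
  omega

lemma Ef_eq_fib (m : ℕ) : Ef m = Nat.fib (m+1) := by
  induction m using Nat.strong_induction_on with
  | _ m IH =>
  match m with
  | 0 => simp [Ef, Nat.fib]
  | 1 => simp [Ef, Finset.sum_range_succ, Nat.fib]
  | (k+2) =>
    rw [Ef_rec, IH (k+1) (by omega), IH k (by omega)]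
    have e1 : Nat.fib (k+1+1) = Nat.fib (k+2) := rfl
    have e2 : Nat.fib (k+2+1) = Nat.fib (k+3) := rfl
    have F : Nat.fib (k+3) = Nat.fib (k+1) + Nat.fib (k+2) := Nat.fib_add_two
    omega

lemma Ff_rec (m : ℕ) : Ff (m+2) = Ff (m+1) + Ff m + Nat.fib (m+1) := by
  have e2 : Ff (m+2) = ∑ i ∈ Finset.range (m+1), (i+1) * ((m - i) + 1).choose (i+1) := by
    rw [Ff, Finset.sum_range_succ' (fun i => i * (m + 2 - i).choose i) (m+2)]
    rw [Finset.sum_range_succ]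
    have h1 : (m + 1 + 1) * (m + 2 - (m + 1 + 1)).choose (m + 1 + 1) = 0 := by
      have h0 : m + 2 - (m + 1 + 1) = 0 := by omega
      rw [h0, Nat.choose_eq_zero_of_lt (by omega), Nat.mul_zero]
    rw [h1]
    simp only [Nat.zero_mul, zero_mul, add_zero]
    apply Finset.sum_congr rfl
    intro i hi; rw [Finset.mem_range] at hi
    have h2 : m + 2 - (i + 1) = (m - i) + 1 := by omega
    rw [h2]
  have e1 : Ff (m+1) = ∑ i ∈ Finset.range (m+1), (i+1) * (m - i).choose (i+1) := by
    rw [Ff, Finset.sum_range_succ' (fun i => i * (m + 1 - i).choose i) (m+1)]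
    simp only [Nat.zero_mul, zero_mul, add_zero]
    apply Finset.sum_congr rfl
    intro i hi; rw [Finset.mem_range] at hi
    have h2 : m + 1 - (i + 1) = m - i := by omega
    rw [h2]
  have e0 : Ff m = ∑ i ∈ Finset.range (m+1), i * (m - i).choose i := rfl
  have eE : ∑ i ∈ Finset.range (m+1), (m - i).choose i = Nat.fib (m+1) := Ef_eq_fib m
  have hp : ∀ i ∈ Finset.range (m+1),
      (i+1) * ((m - i) + 1).choose (i+1)
        = (i * (m - i).choose i + (m - i).choose i) + (i+1) * (m - i).choose (i+1) := by
    intro i _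
    rw [Nat.choose_succ_succ']
    ring
  rw [e2, Finset.sum_congr rfl hp, Finset.sum_add_distrib, Finset.sum_add_distrib,
    e1, e0, eE]
  omega

lemma sum_Zg_eq_Ff (n : ℕ) :
    ∑ r ∈ Finset.range (Nat.fib (n+2)), Zg r = Ff (n+1) := by
  induction n using Nat.strong_induction_on with
  | _ n IH =>
  match n with
  | 0 =>
    have : Nat.fib 2 = 1 := rfl
    rw [this]
    simp [Zg_zero, Ff, Finset.sum_range_succ]
  | 1 =>
    have : Nat.fib 3 = 2 := rfl
    rw [this]
    rw [Finset.sum_range_succ, Finset.sum_range_succ]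
    simp [Zg_zero, Zg_one, Ff, Finset.sum_range_succ]
  | (k+2) =>
    rw [show k+2+2 = (k+1)+3 from rfl, sum_Zg_rec (k+1)]
    rw [IH (k+1) (by omega)]
    have hk : ∑ r ∈ Finset.range (Nat.fib (k+1+1)), Zg r = Ff (k+1) := by
      rw [show k+1+1 = k+2 from rfl]
      exact IH k (by omega)
    rw [hk]
    rw [show k+2+1 = (k+1)+2 from rfl, Ff_rec (k+1)]
    omega

theorem genus_S_sum (a : ℕ) (ha : 3 ≤ a) :
    {m : ℕ | m ∉ S a}.ncard =
      ∑ i ∈ Finset.Icc 1 ((a - 1) / 2), i * Nat.choose (a - 1 - i) i := by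
  obtain ⟨n, rfl⟩ : ∃ n, a = n + 3 := ⟨a - 3, by omega⟩
  rw [card_gaps ha, show n+3 = n+1+2 from rfl, sum_Zg_eq_Ff (n+1)]
  rw [Ff]
  symm
  apply Finset.sum_subset
  · intro i hi
    rw [Finset.mem_Icc] at hi
    rw [Finset.mem_range]
    omega
  · intro i hi hni
    rw [Finset.mem_range] at hi
    rw [Finset.mem_Icc] at hni
    push_neg at hni
    rcases eq_or_ne i 0 with rfl | hi0
    · simp
    · have h2 : (n + 3 - 1) / 2 < i := hni (by omega)
      have h3 : n + 1 + 1 - i < i := by omega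
      rw [show n + 3 - 1 = n + 1 + 1 from rfl] at *
      rw [Nat.choose_eq_zero_of_lt h3, Nat.mul_zero]
end
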